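/- arXiv:2008.13689 — 4 statements merged into one kernel-verified Lean document; each statement's English description precedes it below -/
import Mathlib

section
/- Let σ = (σ_n: A_{n+1}⁺ → A_n⁺)_{n∈ℕ} be an everywhere growing and proper directive sequence. Then for every n ∈ ℕ, X_σ^{(n)} = ⋂_{N>n} ⋃_{k∈ℤ} T^k σ_{[n,N)}(A_N^ℤ). -/
namespace SAdicPaper

/-- A morphism between the free semigroups `A⁺ → B⁺`, determined by the (nonempty)
images of the letters. -/
structure Morphism (A : Type*) (B : Type*) where
  toFun : A → List B
  ne : ∀ a, toFun a ≠ []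

namespace Morphism

universe u v

variable {A B C : Type*}

/-- The image of a word under a morphism. -/
def word (τ : Morphism A B) : List A → List B
  | [] => []
  | a :: w => τ.toFun a ++ τ.word w

theorem word_ne (τ : Morphism A B) {w : List A} (hw : w ≠ []) : τ.word w ≠ [] := by
  cases w with
  | nil => exact absurd rfl hw
  | cons a w =>
    simp only [word]
    intro h
    exact τ.ne a (List.append_eq_nil_iff.mp h).1

/-- The identity morphism. -/
protected def id (A : Type*) : Morphism A A :=
  ⟨fun a => [a], fun a => by simp⟩

/-- Composition of morphisms. -/
def comp (τ : Morphism B C) (σ : Morphism A B) : Morphism A C :=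
  ⟨fun a => τ.word (σ.toFun a), fun a => τ.word_ne (σ.ne a)⟩

/-- `|τ|₁ = ∑_{a ∈ A} |τ(a)|`. -/
def len1 (τ : Morphism A B) [Fintype A] : ℕ := ∑ a, (τ.toFun a).length

/-- `τ` is `r`-proper: there are words `u, v` of length `r` such that every image `τ(a)`
starts with `u` and ends with `v`. -/
def RProper (τ : Morphism A B) (r : ℕ) : Prop :=
  ∃ u v : List B, u.length = r ∧ v.length = r ∧ ∀ a, u <+: τ.toFun a ∧ v <:+ τ.toFun a

/-- `τ` is proper, i.e. `1`-proper. -/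
protected def Proper (τ : Morphism A B) : Prop := τ.RProper 1

/-- Every letter of `B` occurs in some image `τ(a)`. -/
def LetterOnto (τ : Morphism A B) : Prop := ∀ b : B, ∃ a : A, b ∈ τ.toFun a

/-- Every letter of `B` occurs in every image `τ(a)`. -/
def Positive (τ : Morphism A B) : Prop := ∀ (a : A) (b : B), b ∈ τ.toFun a

/-- Transport a morphism along an equality of alphabets. -/
def castDom {A A' : Type u} {B : Type v} (h : A = A') (τ : Morphism A B) : Morphism A' B :=
  h ▸ τ

/-- The cut points of the biinfinite concatenation `⋯ τ(x₋₁) . τ(x₀) τ(x₁) ⋯`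
(where `τ(x₀)` starts at coordinate `0`). -/
def cut (τ : Morphism A B) (x : ℤ → A) (j : ℤ) : ℤ :=
  if 0 ≤ j then ∑ i ∈ Finset.range j.toNat, ((τ.toFun (x (i : ℤ))).length : ℤ)
  else -∑ i ∈ Finset.range (-j).toNat, ((τ.toFun (x (-(i : ℤ) - 1))).length : ℤ)

/-- The extension of a morphism to biinfinite sequences: `τ(x)` is the biinfinite
concatenation `⋯ τ(x₋₁) . τ(x₀) τ(x₁) ⋯`, with `τ(x₀)` starting at coordinate `0`. -/
noncomputable def seq (τ : Morphism A B) (x : ℤ → A) : ℤ → B := fun n =>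
  letI := Classical.dec (∃ j : ℤ, τ.cut x j ≤ n ∧ n < τ.cut x (j + 1))
  if h : ∃ j : ℤ, τ.cut x j ≤ n ∧ n < τ.cut x (j + 1) then
    (τ.toFun (x h.choose)).getD (n - τ.cut x h.choose).toNat
      ((τ.toFun (x 0)).head (τ.ne (x 0)))
  else (τ.toFun (x 0)).head (τ.ne (x 0))

end Morphism

variable {A B : Type*}

/-- The shift map `T`. -/
def shift (x : ℤ → A) : ℤ → A := fun n => x (n + 1)

/-- The iterate `T^k` of the shift. -/
def shiftZ (k : ℤ) (x : ℤ → A) : ℤ → A := fun n => x (n + k)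

/-- A subshift: a closed shift-invariant set of biinfinite sequences. -/
def IsSubshift [TopologicalSpace A] (X : Set (ℤ → A)) : Prop :=
  IsClosed X ∧ ∀ k : ℤ, shiftZ k '' X = X

/-- Every point of `X` has infinite orbit (no nonzero period). -/
def Aperiodic (X : Set (ℤ → A)) : Prop :=
  ∀ x ∈ X, ∀ k : ℤ, k ≠ 0 → shiftZ k x ≠ x

/-- The shift orbit of a point. -/
def orbit (x : ℤ → A) : Set (ℤ → A) := {y | ∃ k : ℤ, y = shiftZ k x}

/-- A minimal subshift: every orbit is dense. -/
def IsMinimalSubshift [TopologicalSpace A] (X : Set (ℤ → A)) : Prop :=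
  IsSubshift X ∧ X.Nonempty ∧ ∀ x ∈ X, X ⊆ closure (orbit x)

/-- A factor map between subshifts. -/
def IsFactorMap [TopologicalSpace A] [TopologicalSpace B]
    (X : Set (ℤ → A)) (Y : Set (ℤ → B)) (π : (ℤ → A) → (ℤ → B)) : Prop :=
  ContinuousOn π X ∧ π '' X = Y ∧ ∀ x ∈ X, π (shift x) = shift (π x)

/-- A conjugacy: a bijective factor map. -/
def IsConjugacy [TopologicalSpace A] [TopologicalSpace B]
    (X : Set (ℤ → A)) (Y : Set (ℤ → B)) (π : (ℤ → A) → (ℤ → B)) : Prop :=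
  IsFactorMap X Y π ∧ Set.InjOn π X

/-- Two subshifts are conjugate. -/
def Conjugate [TopologicalSpace A] [TopologicalSpace B]
    (X : Set (ℤ → A)) (Y : Set (ℤ → B)) : Prop :=
  ∃ π, IsConjugacy X Y π

/-- `⋃_{k ∈ ℤ} T^k τ(X)`. -/
def morphImage (τ : Morphism A B) (X : Set (ℤ → A)) : Set (ℤ → B) :=
  {y | ∃ k : ℤ, ∃ x ∈ X, y = shiftZ k (τ.seq x)}

/-- The finite subword `x_{[i, i+m)}` of a biinfinite sequence. -/
def subword (x : ℤ → A) (i : ℤ) (m : ℕ) : List A :=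
  (List.range m).map fun t => x (i + (t : ℤ))

/-- A centered `τ`-factorization `(k, x)` of `y` in `X`. -/
def IsCenteredFactorization (τ : Morphism A B) (X : Set (ℤ → A))
    (y : ℤ → B) (k : ℤ) (x : ℤ → A) : Prop :=
  x ∈ X ∧ y = shiftZ k (τ.seq x) ∧ 0 ≤ k ∧ k < ((τ.toFun (x 0)).length : ℤ)

/-- The pair `(X, τ)` is recognizable: every point has at most one centered
`τ`-factorization in `X`. -/
def Recognizable (X : Set (ℤ → A)) (τ : Morphism A B) : Prop :=
  ∀ y k x k' x', IsCenteredFactorization τ X y k x →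
    IsCenteredFactorization τ X y k' x' → k = k' ∧ x = x'

/-- Centered right asymptotic pair. -/
def CenteredRightAsymptotic (x x' : ℤ → A) : Prop :=
  (∀ n : ℤ, 0 < n → x n = x' n) ∧ x 0 ≠ x' 0

/-- Centered left asymptotic pair. -/
def CenteredLeftAsymptotic (x x' : ℤ → A) : Prop :=
  (∀ n : ℤ, n < 0 → x n = x' n) ∧ x 0 ≠ x' 0

/-- Right asymptotic pair. -/
def RightAsymptotic (x x' : ℤ → A) : Prop :=
  ∃ k : ℤ, CenteredRightAsymptotic (shiftZ k x) (shiftZ k x')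

/-- Left asymptotic pair. -/
def LeftAsymptotic (x x' : ℤ → A) : Prop :=
  ∃ k : ℤ, CenteredLeftAsymptotic (shiftZ k x) (shiftZ k x')

/-- A distal factor map: points of a common fiber stay at a distance bounded below along
the orbit (stated for the standard metric `dist(x, y) = 2^{-min{|i| : xᵢ ≠ yᵢ}}`). -/
def IsDistalFactor (X : Set (ℤ → A)) (π : (ℤ → A) → (ℤ → B)) : Prop :=
  ∀ x ∈ X, ∀ x' ∈ X, π x = π x' → x ≠ x' →
    ∃ m : ℕ, ∀ k : ℤ, ∃ i : ℤ, |i| ≤ (m : ℤ) ∧ x (k + i) ≠ x' (k + i)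

/-- `π` is almost `k`-to-`1`: the fibers over a residual subset of `Y` have exactly `k`
elements. -/
def AlmostKto1 [TopologicalSpace A] [TopologicalSpace B]
    (X : Set (ℤ → A)) (Y : Set (ℤ → B)) (π : (ℤ → A) → (ℤ → B)) (k : ℕ) : Prop :=
  ∃ R : Set (ℤ → B), R ⊆ Y ∧ {y : ↥Y | (y : ℤ → B) ∈ R} ∈ residual ↥Y ∧
    ∀ y ∈ R, (X ∩ π ⁻¹' {y}).encard = (k : ℕ∞)

/-- `π` has radius `r`: it is given by a local code `ψ` of radius `r` on `Y`. -/
def HasRadius {C : Type*} (Y : Set (ℤ → B)) (π : (ℤ → B) → (ℤ → C)) (r : ℕ) : Prop :=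
  ∃ ψ : (Fin (2 * r + 1) → B) → C,
    ∀ y ∈ Y, ∀ i : ℤ, π y i = ψ fun t => y (i - (r : ℤ) + ((t : ℕ) : ℤ))

/-- A directive sequence `σ = (σ_n : A_{n+1}⁺ → A_n⁺)_{n ∈ ℕ}` with `A_0 = A0`;
here `alph n` is the alphabet `A_{n+1}`, `mor0 = σ_0` and `mor n = σ_{n+1}`. -/
structure DirectiveSeq (A0 : Type) where
  alph : ℕ → Type
  fin : ∀ n, Fintype (alph n)
  mor0 : Morphism (alph 0) A0
  mor : ∀ n, Morphism (alph (n + 1)) (alph n)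

attribute [instance] DirectiveSeq.fin

namespace DirectiveSeq

variable {A0 B0 : Type}

/-- `σ_{[0, N+1)} : A_{N+1}⁺ → A_0⁺`. -/
def down (S : DirectiveSeq A0) : ∀ N : ℕ, Morphism (S.alph N) A0
  | 0 => S.mor0
  | N + 1 => (S.down N).comp (S.mor N)

/-- `σ_{[n+1, n+N+1)} : A_{n+N+1}⁺ → A_{n+1}⁺`. -/
def seg (S : DirectiveSeq A0) (n : ℕ) : ∀ N : ℕ, Morphism (S.alph (n + N)) (S.alph n)
  | 0 => Morphism.id _
  | N + 1 => (S.seg n N).comp (S.mor (n + N))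

/-- The generated S-adic subshift `X_σ = X_σ^{(0)}`. -/
def X0 (S : DirectiveSeq A0) : Set (ℤ → A0) :=
  {x | ∀ (i : ℤ) (m : ℕ), ∃ (N : ℕ) (a : S.alph N), subword x i m <:+: (S.down N).toFun a}

/-- The level `X_σ^{(n+1)}` of the S-adic subshift. -/
def levelSet (S : DirectiveSeq A0) (n : ℕ) : Set (ℤ → S.alph n) :=
  {x | ∀ (i : ℤ) (m : ℕ), ∃ (N : ℕ) (a : S.alph (n + (N + 1))),
    subword x i m <:+: (S.seg n (N + 1)).toFun a}

/-- `⟨σ_{[0,N)}⟩ → ∞`. -/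
def EverywhereGrowing (S : DirectiveSeq A0) : Prop :=
  ∀ m : ℕ, ∃ N0 : ℕ, ∀ N ≥ N0, ∀ a : S.alph N, m ≤ ((S.down N).toFun a).length

protected def Proper (S : DirectiveSeq A0) : Prop :=
  S.mor0.Proper ∧ ∀ n, (S.mor n).Proper

protected def LetterOnto (S : DirectiveSeq A0) : Prop :=
  S.mor0.LetterOnto ∧ ∀ n, (S.mor n).LetterOnto

protected def Primitive (S : DirectiveSeq A0) : Prop :=
  (∃ N, (S.down N).Positive) ∧ ∀ n, ∃ N, (S.seg n (N + 1)).Positive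

protected def Recognizable (S : DirectiveSeq A0) : Prop :=
  SAdicPaper.Recognizable (S.levelSet 0) S.mor0 ∧
    ∀ n, SAdicPaper.Recognizable (S.levelSet (n + 1)) (S.mor n)

/-- The alphabet rank `AR(σ) = liminf_n #A_n`. -/
noncomputable def rank (S : DirectiveSeq A0) : ℕ∞ :=
  Filter.liminf (fun n => (Fintype.card (S.alph n) : ℕ∞)) Filter.atTop

/-- The contraction `(σ_{[n_k, n_{k+1})})_{k ∈ ℕ}` of a directive sequence. -/
def contract (S : DirectiveSeq A0) (n : ℕ → ℕ) (hn : StrictMono n) (h0 : n 0 = 0) :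
    DirectiveSeq A0 where
  alph k := S.alph (n (k + 1) - 1)
  fin k := S.fin _
  mor0 := S.down (n 1 - 1)
  mor k := Morphism.castDom
    (congrArg S.alph
      (show (n (k + 1) - 1) + (n (k + 2) - n (k + 1)) = n (k + 2) - 1 by
        have h2 := hn (show 0 < k + 1 by omega)
        have h3 : n (k + 1) ≤ n (k + 2) := hn.monotone (by omega)
        omega))
    (S.seg (n (k + 1) - 1) (n (k + 2) - n (k + 1)))

/-- `T` is a contraction of `S`. -/
def IsContraction (T S : DirectiveSeq A0) : Prop :=
  ∃ (n : ℕ → ℕ) (hn : StrictMono n) (h0 : n 0 = 0), T = S.contract n hn h0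

/-- Two directive sequences are equivalent if both are contractions of a common one. -/
def Equivalent (S : DirectiveSeq A0) (T : DirectiveSeq A0) : Prop :=
  ∃ V : DirectiveSeq A0, IsContraction S V ∧ IsContraction T V

end DirectiveSeq

/-- `X` is generated by a proper, primitive and recognizable directive sequence of
alphabet rank at most `K`. -/
def HasRankRep {A0 : Type} (X : Set (ℤ → A0)) (K : ℕ) : Prop :=
  ∃ S : DirectiveSeq A0, S.X0 = X ∧ S.Proper ∧ S.Primitive ∧ S.Recognizable ∧
    S.rank ≤ (K : ℕ∞)

/-- The topological rank of `X` equals `K`. -/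
def TopRankEq {A0 : Type} (X : Set (ℤ → A0)) (K : ℕ) : Prop :=
  HasRankRep X K ∧ ∀ K' : ℕ, HasRankRep X K' → K ≤ K'

/-- A factor `φ : σ → τ` between directive sequences: `φ_0 : A_1⁺ → B_0⁺` (`phi0`) and
`φ_{n+1} : A_{n+1}⁺ → B_{n+1}⁺` (`phi n`), with `φ_0 = τ_0 ∘ φ_1` and
`φ_n ∘ σ_n = τ_n ∘ φ_{n+1}` for `n ≥ 1`. -/
structure SeqFactor {A0 B0 : Type} (S : DirectiveSeq A0) (T : DirectiveSeq B0) where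
  phi0 : Morphism (S.alph 0) B0
  phi : ∀ n, Morphism (S.alph n) (T.alph n)
  comm0 : phi0 = T.mor0.comp (phi 0)
  comm : ∀ n, (phi n).comp (S.mor n) = (T.mor n).comp (phi (n + 1))

namespace SeqFactor

variable {A0 B0 : Type} {S : DirectiveSeq A0} {T : DirectiveSeq B0}

def LetterOnto (F : SeqFactor S T) : Prop :=
  F.phi0.LetterOnto ∧ ∀ n, (F.phi n).LetterOnto

def Proper (F : SeqFactor S T) : Prop :=
  F.phi0.Proper ∧ ∀ n, (F.phi n).Proper

end SeqFactor

end SAdicPaper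

namespace SAdicPaper

namespace Morphism

variable {A B C D : Type*}

theorem ext' {τ σ : Morphism A B} (h : τ.toFun = σ.toFun) : τ = σ := by
  cases τ; cases σ; simpa using h

@[simp] theorem word_nil (τ : Morphism A B) : τ.word [] = [] := rfl

@[simp] theorem word_cons (τ : Morphism A B) (a : A) (w : List A) :
    τ.word (a :: w) = τ.toFun a ++ τ.word w := rfl

theorem word_append (τ : Morphism A B) (u v : List A) :
    τ.word (u ++ v) = τ.word u ++ τ.word v := by
  induction u with
  | nil => simp
  | cons a u ih => simp [ih]

theorem comp_toFun (τ : Morphism B C) (σ : Morphism A B) (a : A) :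
    (τ.comp σ).toFun a = τ.word (σ.toFun a) := rfl

theorem comp_word (τ : Morphism B C) (σ : Morphism A B) (w : List A) :
    (τ.comp σ).word w = τ.word (σ.word w) := by
  induction w with
  | nil => simp
  | cons a w ih => simp [comp_toFun, ih, word_append]

theorem comp_assoc (τ : Morphism C D) (σ : Morphism B C) (ρ : Morphism A B) :
    (τ.comp σ).comp ρ = τ.comp (σ.comp ρ) := by
  apply ext'; funext a; simp [comp_toFun, comp_word]

theorem comp_id (τ : Morphism A B) : τ.comp (Morphism.id A) = τ := by
  apply ext'; funext a; simp [comp_toFun, Morphism.id, word_cons]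

theorem id_word (w : List A) : (Morphism.id A).word w = w := by
  induction w with
  | nil => simp
  | cons a w ih => simp only [Morphism.id, word_cons] at ih ⊢; simp [ih]

theorem id_comp (τ : Morphism A B) : (Morphism.id B).comp τ = τ := by
  apply ext'; funext a; simp [comp_toFun, id_word]

theorem word_infix (τ : Morphism A B) {u v : List A} (h : u <:+: v) :
    τ.word u <:+: τ.word v := by
  obtain ⟨l, r, rfl⟩ := h
  exact ⟨τ.word l, τ.word r, by simp [word_append]⟩

theorem length_toFun_pos (τ : Morphism A B) (a : A) : 0 < (τ.toFun a).length :=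
  List.length_pos_iff.mpr (τ.ne a)

theorem word_length_le (τ : Morphism A B) {C : ℕ} (h : ∀ a, (τ.toFun a).length ≤ C) :
    ∀ w : List A, (τ.word w).length ≤ C * w.length := by
  intro w
  induction w with
  | nil => simp
  | cons a w ih =>
    have := h a
    simp only [word_cons, List.length_append, List.length_cons]
    calc (τ.toFun a).length + (τ.word w).length ≤ C + C * w.length := by omega
    _ = C * (w.length + 1) := by ring

end Morphism

end SAdicPaper
namespace SAdicPaper

namespace Morphism

variable {A B : Type*}

@[simp] theorem cut_zero (τ : Morphism A B) (y : ℤ → A) : τ.cut y 0 = 0 := by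
  simp [cut]

theorem cut_succ (τ : Morphism A B) (y : ℤ → A) (j : ℤ) :
    τ.cut y (j + 1) = τ.cut y j + ((τ.toFun (y j)).length : ℤ) := by
  rcases le_or_gt 0 j with hj | hj
  · rw [cut, cut, if_pos (by omega : (0:ℤ) ≤ j + 1), if_pos hj]
    have h1 : (j + 1).toNat = j.toNat + 1 := by omega
    rw [h1, Finset.sum_range_succ, Int.toNat_of_nonneg hj]
  · rcases eq_or_lt_of_le (by omega : j + 1 ≤ 0) with h0 | h0
    · have hj1 : j = -1 := by omega
      subst hj1
      rw [cut, cut]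
      norm_num [Finset.sum_range_one]
    · rw [cut, cut, if_neg (by omega), if_neg (by omega)]
      have h2 : (-j).toNat = (-(j + 1)).toNat + 1 := by omega
      rw [h2, Finset.sum_range_succ]
      have h3 : -((-(j + 1)).toNat : ℤ) - 1 = j := by omega
      rw [h3]
      ring

theorem cut_lt_succ (τ : Morphism A B) (y : ℤ → A) (j : ℤ) :
    τ.cut y j < τ.cut y (j + 1) := by
  rw [cut_succ]
  have h := τ.length_toFun_pos (y j)
  omega

theorem cut_strictMono (τ : Morphism A B) (y : ℤ → A) : StrictMono (τ.cut y) :=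
  strictMono_int_of_lt_succ (τ.cut_lt_succ y)

theorem le_cut (τ : Morphism A B) (y : ℤ → A) : ∀ j : ℤ, 0 ≤ j → j ≤ τ.cut y j :=
  Int.le_induction (by simp) (fun n _ ih => by have := τ.cut_lt_succ y n; omega)

theorem cut_le (τ : Morphism A B) (y : ℤ → A) : ∀ j : ℤ, j ≤ 0 → τ.cut y j ≤ j :=
  Int.le_induction_down (by simp) (fun n _ ih => by
    have h := τ.cut_lt_succ y (n - 1)
    rw [sub_add_cancel] at h
    omega)

theorem exists_block (τ : Morphism A B) (y : ℤ → A) (n : ℤ) :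
    ∃ j : ℤ, τ.cut y j ≤ n ∧ n < τ.cut y (j + 1) := by
  obtain ⟨j, hj, hmax⟩ := Int.exists_greatest_of_bdd (P := fun z => τ.cut y z ≤ n)
    ⟨max n 0, fun z hz => by
      by_contra h
      push_neg at h
      have h0 : 0 ≤ z := by omega
      have := τ.le_cut y z h0
      omega⟩
    ⟨min n 0, le_trans (τ.cut_le y _ (min_le_right n 0)) (min_le_left n 0)⟩
  refine ⟨j, hj, ?_⟩
  by_contra h
  push_neg at h
  have := hmax (j + 1) h
  omega

theorem block_unique (τ : Morphism A B) (y : ℤ → A) {j j' n : ℤ}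
    (h : τ.cut y j ≤ n ∧ n < τ.cut y (j + 1)) (h' : τ.cut y j' ≤ n ∧ n < τ.cut y (j' + 1)) :
    j = j' := by
  by_contra hne
  rcases lt_or_gt_of_ne hne with hlt | hlt
  · have := (τ.cut_strictMono y).monotone (show j + 1 ≤ j' by omega)
    omega
  · have := (τ.cut_strictMono y).monotone (show j' + 1 ≤ j by omega)
    omega

theorem seq_eq (τ : Morphism A B) (y : ℤ → A) {j n : ℤ} (d : B)
    (h1 : τ.cut y j ≤ n) (h2 : n < τ.cut y (j + 1)) :
    τ.seq y n = (τ.toFun (y j)).getD (n - τ.cut y j).toNat d := by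
  have hex : ∃ j : ℤ, τ.cut y j ≤ n ∧ n < τ.cut y (j + 1) := ⟨j, h1, h2⟩
  have hcs := τ.cut_succ y j
  have hlt : (n - τ.cut y j).toNat < (τ.toFun (y j)).length := by omega
  simp only [Morphism.seq]
  rw [dif_pos hex]
  have hc := hex.choose_spec
  have hcj : hex.choose = j := τ.block_unique y hc ⟨h1, h2⟩
  rw [hcj, List.getD_eq_getElem _ _ hlt, List.getD_eq_getElem _ _ hlt]

end Morphism

end SAdicPaper
namespace SAdicPaper

variable {A B : Type*}

@[simp] theorem shiftZ_apply (k : ℤ) (x : ℤ → A) (n : ℤ) : shiftZ k x n = x (n + k) := rfl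

theorem shiftZ_shiftZ (a b : ℤ) (x : ℤ → A) : shiftZ a (shiftZ b x) = shiftZ (a + b) x := by
  funext n
  simp [shiftZ, add_assoc]

theorem subword_def (x : ℤ → A) (i : ℤ) (m : ℕ) :
    subword x i m = (List.range m).map (fun t : ℕ => x (i + (t : ℤ))) := by
  rw [subword]
  simp only [List.pure_def, List.bind_eq_flatMap]
  have h : (List.range m).flatMap (fun a : ℕ => [(a : ℤ)]) =
      List.map (fun a : ℕ => (a : ℤ)) (List.range m) := List.flatMap_pure_eq_map _ _
  rw [h, List.map_map]
  rfl

@[simp] theorem subword_zero (x : ℤ → A) (i : ℤ) : subword x i 0 = [] := by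
  rw [subword_def]; rfl

@[simp] theorem subword_length (x : ℤ → A) (i : ℤ) (m : ℕ) : (subword x i m).length = m := by
  rw [subword_def, List.length_map, List.length_range]

theorem subword_succ (x : ℤ → A) (i : ℤ) (m : ℕ) :
    subword x i (m + 1) = x i :: subword x (i + 1) m := by
  rw [subword_def, subword_def]
  simp only [List.range_succ_eq_map, List.map_cons, List.map_map]
  congr 1
  · norm_num
  · apply List.map_congr_left
    intro t _
    simp only [Function.comp_apply]
    congr 1
    push_cast
    ring

theorem subword_add (x : ℤ → A) (i : ℤ) (m₁ m₂ : ℕ) :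
    subword x i (m₁ + m₂) = subword x i m₁ ++ subword x (i + m₁) m₂ := by
  induction m₁ generalizing i with
  | zero => simp
  | succ m₁ ih =>
    have h : m₁ + 1 + m₂ = (m₁ + m₂) + 1 := by omega
    rw [h, subword_succ, ih, subword_succ]
    simp only [List.cons_append]
    congr 2
    push_cast
    ring

theorem subword_getD (x : ℤ → A) (i : ℤ) (m : ℕ) {t : ℕ} (ht : t < m) (d : A) :
    (subword x i m).getD t d = x (i + t) := by
  rw [subword_def]
  have h2 : t < ((List.range m).map (fun t : ℕ => x (i + (t : ℤ)))).length := by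
    simpa using ht
  rw [List.getD_eq_getElem _ d h2, List.getElem_map, List.getElem_range]

theorem subword_shiftZ (k : ℤ) (x : ℤ → A) (i : ℤ) (m : ℕ) :
    subword (shiftZ k x) i m = subword x (i + k) m := by
  rw [subword_def, subword_def]
  apply List.map_congr_left
  intro t _
  simp only [shiftZ_apply]
  congr 1
  ring

theorem subword_infix (x : ℤ → A) {p q : ℤ} {m n : ℕ} (h1 : q ≤ p) (h2 : p + m ≤ q + n) :
    subword x p m <:+: subword x q n := by
  set dq : ℕ := (p - q).toNat with hd
  have hdq : (dq : ℤ) = p - q := Int.toNat_of_nonneg (by omega)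
  have hn : n = dq + (m + (n - dq - m)) := by omega
  rw [hn, subword_add, subword_add]
  have hq : q + (dq : ℤ) = p := by omega
  rw [hq]
  exact ⟨subword x q dq, subword x (p + m) (n - dq - m), by simp⟩

theorem subword_eq_of_getD (x : ℤ → A) (i : ℤ) (L : List A) (d : A)
    (h : ∀ t : ℕ, t < L.length → x (i + t) = L.getD t d) :
    subword x i L.length = L := by
  apply List.ext_getElem (by simp)
  intro t h1 h2
  have h3 : t < L.length := h2
  rw [← List.getD_eq_getElem _ d h2, ← h t h3, ← subword_getD x i L.length h3 d,
    List.getD_eq_getElem]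

namespace Morphism

/-- Master lemma: the stretch of `τ.seq y` from `cut y a` of the appropriate length
equals `τ.word` of the letters `y a, …, y (a + L - 1)`. -/
theorem subword_seq (τ : Morphism A B) (y : ℤ → A) (d : B) :
    ∀ (L : ℕ) (a : ℤ),
      subword (τ.seq y) (τ.cut y a) (τ.word (subword y a L)).length = τ.word (subword y a L) := by
  intro L
  induction L with
  | zero => simp
  | succ L ih =>
    intro a
    rw [subword_succ, word_cons, List.length_append, subword_add]
    have hc : τ.cut y a + ((τ.toFun (y a)).length : ℤ) = τ.cut y (a + 1) := (τ.cut_succ y a).symm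
    rw [hc, ih (a + 1)]
    congr 1
    apply subword_eq_of_getD (d := d)
    intro t ht
    rw [τ.seq_eq y d (j := a) (by omega) (by rw [← hc]; exact_mod_cast by omega)]
    congr 1
    omega

end Morphism

end SAdicPaper
namespace SAdicPaper

variable {A B : Type*}

namespace Morphism

theorem cut_shiftZ (τ : Morphism A B) (y : ℤ → A) (j : ℤ) :
    ∀ i : ℤ, τ.cut (shiftZ j y) i = τ.cut y (j + i) - τ.cut y j := by
  intro i
  induction i using Int.induction_on with
  | zero => simp
  | succ i ih =>
    rw [τ.cut_succ (shiftZ j y) i, ih]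
    have h : j + ((i : ℤ) + 1) = (j + i) + 1 := by ring
    rw [h, τ.cut_succ y (j + i)]
    have h2 : (shiftZ j y) i = y (j + i) := by rw [shiftZ_apply]; congr 1; ring
    rw [h2]
    ring
  | pred i ih =>
    have hs := τ.cut_succ (shiftZ j y) (-(i : ℤ) - 1)
    have hs' : -(i : ℤ) - 1 + 1 = -(i : ℤ) := by ring
    rw [hs'] at hs
    have h2 : (shiftZ j y) (-(i : ℤ) - 1) = y (j + (-(i : ℤ) - 1)) := by
      rw [shiftZ_apply]; congr 1; ring
    rw [h2] at hs
    have hy := τ.cut_succ y (j + (-(i : ℤ) - 1))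
    have h3 : j + (-(i : ℤ) - 1) + 1 = j + -(i : ℤ) := by ring
    rw [h3] at hy
    have h4 : -((i : ℤ) + 1) = -(i : ℤ) - 1 := by ring
    rw [h4, show j + (-(i : ℤ) - 1) = j + -((i : ℤ) + 1) from by ring] at *
    omega

theorem seq_shiftZ (τ : Morphism A B) (y : ℤ → A) (j : ℤ) :
    τ.seq (shiftZ j y) = shiftZ (τ.cut y j) (τ.seq y) := by
  funext n
  obtain ⟨j'', h1, h2⟩ := τ.exists_block y (n + τ.cut y j)
  set i := j'' - j with hi
  have hji : j + i = j'' := by omega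
  have hc1 : τ.cut (shiftZ j y) i ≤ n := by rw [τ.cut_shiftZ, hji]; omega
  have hc2 : n < τ.cut (shiftZ j y) (i + 1) := by
    rw [τ.cut_shiftZ]
    have h5 : j + (i + 1) = j'' + 1 := by omega
    rw [h5]
    omega
  set d : B := (τ.toFun (y 0)).head (τ.ne (y 0)) with hd
  rw [show shiftZ (τ.cut y j) (τ.seq y) n = τ.seq y (n + τ.cut y j) from rfl]
  rw [τ.seq_eq (shiftZ j y) d hc1 hc2, τ.seq_eq y d h1 h2]
  have hyi : (shiftZ j y) i = y j'' := by rw [shiftZ_apply]; congr 1; omega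
  rw [hyi]
  congr 2
  rw [τ.cut_shiftZ, hji]
  ring

theorem block_bounds (τ : Morphism A B) (y : ℤ → A) {j n : ℤ}
    (h1 : τ.cut y j ≤ n) (h2 : n < τ.cut y (j + 1)) : min n 0 ≤ j ∧ j ≤ max n 0 := by
  constructor
  · rcases le_or_gt 0 j with hj | hj
    · omega
    · have := τ.cut_le y (j + 1) (by omega)
      omega
  · rcases le_or_gt j 0 with hj | hj
    · omega
    · have := τ.le_cut y j (by omega)
      omega

theorem cut_congr (τ : Morphism A B) {y y' : ℤ → A} {R : ℤ} (h : ∀ i : ℤ, -R ≤ i → i ≤ R → y i = y' i)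
    {j : ℤ} (hj1 : -R ≤ j) (hj2 : j ≤ R) : τ.cut y j = τ.cut y' j := by
  rw [cut, cut]
  split
  · apply Finset.sum_congr rfl
    intro i hi
    simp only [Finset.mem_range] at hi
    rw [h i (by omega) (by omega)]
  · congr 1
    apply Finset.sum_congr rfl
    intro i hi
    simp only [Finset.mem_range] at hi
    rw [h (-(i : ℤ) - 1) (by omega) (by omega)]

theorem seq_local (τ : Morphism A B) {y y' : ℤ → A} {n : ℤ} {R : ℤ}
    (hR : |n| + 1 ≤ R) (h : ∀ i : ℤ, -R ≤ i → i ≤ R → y i = y' i) :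
    τ.seq y n = τ.seq y' n := by
  have habs : -|n| ≤ n ∧ n ≤ |n| := ⟨neg_abs_le n, le_abs_self n⟩
  have habs0 : 0 ≤ |n| := abs_nonneg n
  obtain ⟨j, h1, h2⟩ := τ.exists_block y n
  have hb := τ.block_bounds y h1 h2
  have hcj : τ.cut y j = τ.cut y' j := τ.cut_congr h (by omega) (by omega)
  have hcj1 : τ.cut y (j + 1) = τ.cut y' (j + 1) := τ.cut_congr h (by omega) (by omega)
  set d : B := (τ.toFun (y 0)).head (τ.ne (y 0)) with hd
  rw [τ.seq_eq y d h1 h2, τ.seq_eq y' d (j := j) (by omega) (by omega), ← hcj,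
    h j (by omega) (by omega)]

end Morphism

end SAdicPaper
namespace SAdicPaper

variable {A B : Type*}

theorem mem_morphImage {τ : Morphism A B} {X : Set (ℤ → A)} {x : ℤ → B} :
    x ∈ morphImage τ X ↔ ∃ k : ℤ, ∃ y ∈ X, x = shiftZ k (τ.seq y) := Iff.rfl

theorem continuous_shiftZ [TopologicalSpace B] (k : ℤ) :
    Continuous (shiftZ k : (ℤ → B) → ℤ → B) :=
  continuous_pi fun n => continuous_apply (n + k)

namespace Morphism

theorem seq_continuous [TopologicalSpace A] [DiscreteTopology A] [TopologicalSpace B]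
    (τ : Morphism A B) : Continuous τ.seq := by
  apply continuous_pi
  intro n
  apply IsLocallyConstant.continuous
  rw [IsLocallyConstant.iff_exists_open]
  intro y
  refine ⟨⋂ i ∈ Finset.Icc (-(|n| + 1)) (|n| + 1), {y' : ℤ → A | y' i = y i}, ?_, ?_, ?_⟩
  · refine isOpen_biInter_finset fun i _ => ?_
    show IsOpen ((fun y' : ℤ → A => y' i) ⁻¹' {y i})
    exact IsOpen.preimage (continuous_apply i) (isOpen_discrete {y i})
  · simp only [Set.mem_iInter, Set.mem_setOf_eq]
    intro i _
    trivial
  · intro y' hy'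
    simp only [Set.mem_iInter, Set.mem_setOf_eq] at hy'
    refine τ.seq_local (le_refl (|n| + 1)) ?_
    intro i hi1 hi2
    exact hy' i (Finset.mem_Icc.mpr ⟨hi1, hi2⟩)

theorem morphImage_eq_finite_union [Fintype A] (τ : Morphism A B) :
    morphImage τ Set.univ =
      ⋃ k ∈ Finset.range ((Finset.univ.sup fun a : A => (τ.toFun a).length) + 1),
        shiftZ (k : ℤ) '' Set.range τ.seq := by
  classical
  have hC : ∀ a, (τ.toFun a).length < (Finset.univ.sup fun a : A => (τ.toFun a).length) + 1 :=
    fun a => Nat.lt_succ_of_le (Finset.le_sup (f := fun a : A => (τ.toFun a).length) (Finset.mem_univ a))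
  ext x
  simp only [mem_morphImage, Set.mem_iUnion, Set.mem_image, Set.mem_range, Finset.mem_range,
    exists_prop]
  constructor
  · rintro ⟨k, y, -, rfl⟩
    obtain ⟨j, hj1, hj2⟩ := τ.exists_block y k
    have hcs := τ.cut_succ y j
    have hlen := hC (y j)
    have h2' : (k - τ.cut y j).toNat < (τ.toFun (y j)).length := by omega
    have hklt : (k - τ.cut y j).toNat < (Finset.univ.sup fun a : A => (τ.toFun a).length) + 1 :=
      h2'.trans_le ((Finset.le_sup (f := fun a : A => (τ.toFun a).length)
        (Finset.mem_univ (y j))).trans (Nat.le_succ _))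
    refine ⟨(k - τ.cut y j).toNat, hklt, ⟨τ.seq (shiftZ j y), ⟨shiftZ j y, rfl⟩, ?_⟩⟩
    rw [τ.seq_shiftZ, shiftZ_shiftZ]
    have harg : ((k - τ.cut y j).toNat : ℤ) + τ.cut y j = k := by omega
    rw [harg]
  · rintro ⟨k, -, z, ⟨y, rfl⟩, rfl⟩
    exact ⟨(k : ℤ), y, Set.mem_univ y, rfl⟩

theorem morphImage_closed [Fintype A] [TopologicalSpace A] [DiscreteTopology A]
    [TopologicalSpace B] [DiscreteTopology B] (τ : Morphism A B) :
    IsClosed (morphImage τ Set.univ) := by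
  rw [τ.morphImage_eq_finite_union]
  apply Set.Finite.isClosed_biUnion (Finset.finite_toSet _)
  intro k _
  exact ((isCompact_range τ.seq_continuous).image (continuous_shiftZ (k : ℤ))).isClosed

end Morphism

end SAdicPaper
namespace SAdicPaper

namespace DirectiveSeq

variable {A0 : Type}

@[simp] theorem down_zero (S : DirectiveSeq A0) : S.down 0 = S.mor0 := rfl

theorem down_succ (S : DirectiveSeq A0) (N : ℕ) :
    S.down (N + 1) = (S.down N).comp (S.mor N) := rfl

@[simp] theorem seg_zero (S : DirectiveSeq A0) (n : ℕ) : S.seg n 0 = Morphism.id _ := rfl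

theorem seg_succ (S : DirectiveSeq A0) (n N : ℕ) :
    S.seg n (N + 1) = (S.seg n N).comp (S.mor (n + N)) := rfl

theorem down_add (S : DirectiveSeq A0) (K L : ℕ) :
    S.down (K + L) = (S.down K).comp (S.seg K L) := by
  induction L with
  | zero => exact (Morphism.comp_id _).symm
  | succ L ih =>
    show S.down ((K + L) + 1) = (S.down K).comp (S.seg K (L + 1))
    rw [down_succ, ih, Morphism.comp_assoc]
    rfl

/-- The shifted directive sequence `(σ_{n+1+k})_k`, whose `X0` is `levelSet n`. -/
def tail (S : DirectiveSeq A0) (n : ℕ) : DirectiveSeq (S.alph n) where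
  alph k := S.alph (n + k + 1)
  fin k := S.fin _
  mor0 := S.mor n
  mor k := S.mor (n + k + 1)

theorem tail_down (S : DirectiveSeq A0) (n N : ℕ) :
    (S.tail n).down N = S.seg n (N + 1) := by
  induction N with
  | zero =>
    show S.mor n = S.seg n 1
    rw [seg_succ, seg_zero, Morphism.id_comp]
    rfl
  | succ N ih =>
    show ((S.tail n).down N).comp ((S.tail n).mor N) = S.seg n (N + 2)
    rw [ih]
    rfl

theorem tail_X0 (S : DirectiveSeq A0) (n : ℕ) : (S.tail n).X0 = S.levelSet n := by
  ext x
  constructor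
  · intro h i m
    obtain ⟨N, a, ha⟩ := h i m
    rw [tail_down] at ha
    exact ⟨N, a, ha⟩
  · intro h i m
    obtain ⟨N, a, ha⟩ := h i m
    rw [← tail_down] at ha
    exact ⟨N, a, ha⟩

theorem tail_proper (S : DirectiveSeq A0) (n : ℕ) (h : S.Proper) : (S.tail n).Proper :=
  ⟨h.2 n, fun k => h.2 (n + k + 1)⟩

theorem alph_nonempty (S : DirectiveSeq A0) (h : S.Proper) (n : ℕ) : Nonempty (S.alph n) := by
  obtain ⟨u, v, hu, hv, _⟩ := h.2 n
  cases u with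
  | nil => simp at hu
  | cons b _ => exact ⟨b⟩

theorem A0_nonempty (S : DirectiveSeq A0) (h : S.Proper) : Nonempty A0 := by
  obtain ⟨u, v, hu, hv, _⟩ := h.1
  cases u with
  | nil => simp at hu
  | cons b _ => exact ⟨b⟩

theorem tail_everywhereGrowing (S : DirectiveSeq A0) (n : ℕ) (hEG : S.EverywhereGrowing)
    (hpr : S.Proper) : (S.tail n).EverywhereGrowing := by
  classical
  intro m
  haveI : Nonempty (S.alph n) := S.alph_nonempty hpr n
  set Cn := Finset.univ.sup (fun b : S.alph n => ((S.down n).toFun b).length) with hCn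
  have hCb : ∀ b : S.alph n, ((S.down n).toFun b).length ≤ Cn :=
    fun b => Finset.le_sup (f := fun b : S.alph n => ((S.down n).toFun b).length)
      (Finset.mem_univ b)
  have hCpos : 1 ≤ Cn := by
    obtain ⟨b⟩ := ‹Nonempty (S.alph n)›
    have h1 := (S.down n).length_toFun_pos b
    have h2 := hCb b
    omega
  obtain ⟨N0, hN0⟩ := hEG (Cn * m)
  refine ⟨N0, fun N hN a => ?_⟩
  have h1 := hN0 (n + (N + 1)) (by omega) a
  have h2 : ((S.down (n + (N + 1))).toFun a).length ≤
      Cn * (((S.seg n (N + 1)).toFun a).length) := by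
    rw [S.down_add n (N + 1)]
    exact (S.down n).word_length_le hCb _
  rw [tail_down]
  exact Nat.le_of_mul_le_mul_left (le_trans h1 h2) (by omega)
end DirectiveSeq

end SAdicPaper
namespace SAdicPaper

variable {α : Type*}

theorem infix_append_cases {w u v : List α} (h : w <:+: u ++ v) :
    w <:+: u ∨ w <:+: v ∨ ∃ s t, w = s ++ t ∧ s <:+ u ∧ t <+: v := by
  obtain ⟨l, r, hlr⟩ := h
  rw [List.append_assoc] at hlr
  rcases List.append_eq_append_iff.mp hlr with ⟨e, hu, hwr⟩ | ⟨e, hl, hv⟩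
  · rcases List.append_eq_append_iff.mp hwr with ⟨f, he, hr⟩ | ⟨f, hw, hv⟩
    · left
      exact ⟨l, f, by rw [hu, he, List.append_assoc]⟩
    · right; right
      exact ⟨e, f, hw, ⟨l, hu.symm⟩, ⟨r, hv.symm⟩⟩
  · right; left
    exact ⟨e, r, by rw [hv, List.append_assoc]⟩

theorem suffix_of_suffix_length_le' {l1 l2 L : List α} (h1 : l1 <:+ L) (h2 : l2 <:+ L)
    (h : l1.length ≤ l2.length) : l1 <:+ l2 := by
  obtain ⟨p1, hp1⟩ := h1
  obtain ⟨p2, hp2⟩ := h2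
  rcases List.append_eq_append_iff.mp (hp1.trans hp2.symm) with ⟨e, hq, hl⟩ | ⟨e, hq, hl⟩
  · have hlen := congrArg List.length hl
    simp only [List.length_append] at hlen
    have he : e = [] := List.length_eq_zero_iff.mp (by omega)
    subst he
    rw [List.nil_append] at hl
    rw [hl]
  · exact ⟨e, hl.symm⟩

theorem prefix_of_prefix_length_le' {l1 l2 L : List α} (h1 : l1 <+: L) (h2 : l2 <+: L)
    (h : l1.length ≤ l2.length) : l1 <+: l2 := by
  obtain ⟨p1, hp1⟩ := h1
  obtain ⟨p2, hp2⟩ := h2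
  rcases List.append_eq_append_iff.mp (hp1.trans hp2.symm) with ⟨e, hq, hl⟩ | ⟨e, hq, hl⟩
  · exact ⟨e, hq.symm⟩
  · have hlen := congrArg List.length hq
    simp only [List.length_append] at hlen
    have he : e = [] := List.length_eq_zero_iff.mp (by omega)
    subst he
    rw [List.append_nil] at hq
    rw [hq]

end SAdicPaper
namespace SAdicPaper

namespace DirectiveSeq

variable {A0 : Type}

theorem inter_subset_X0 (S : DirectiveSeq A0) (hEG : S.EverywhereGrowing) (hpr : S.Proper) :
    (⋂ N : ℕ, morphImage (S.down N) Set.univ) ⊆ S.X0 := by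
  classical
  have hNE : ∀ k, Nonempty (S.alph k) := S.alph_nonempty hpr
  obtain ⟨d0⟩ := S.A0_nonempty hpr
  intro x hx
  rw [Set.mem_iInter] at hx
  intro i m
  rcases Nat.eq_zero_or_pos m with rfl | hm
  · obtain ⟨a⟩ := hNE 0
    exact ⟨0, a, by simp [List.nil_infix]⟩
  -- N1 : level with all blocks of length ≥ m
  obtain ⟨N1, hN1⟩ := hEG m
  have hblk : ∀ b : S.alph N1, m ≤ ((S.down N1).toFun b).length := hN1 N1 le_rfl
  -- proper letters of σ_{N1}
  obtain ⟨lu, lv, hlu, hlv, hprop⟩ := hpr.2 N1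
  obtain ⟨u, rfl⟩ : ∃ u0, lu = [u0] := List.length_eq_one_iff.mp hlu
  obtain ⟨v, rfl⟩ : ∃ v0, lv = [v0] := List.length_eq_one_iff.mp hlv
  set τ : Morphism (S.alph (N1 + 1)) A0 := S.down (N1 + 1) with hτ
  -- images of σ_{[0,N1+1)} start with down N1 u and end with down N1 v
  have hsufDNv : ∀ b : S.alph (N1 + 1), (S.down N1).toFun v <:+ τ.toFun b := by
    intro b
    obtain ⟨q, hq⟩ := (hprop b).2
    refine ⟨(S.down N1).word q, ?_⟩
    show (S.down N1).word q ++ (S.down N1).toFun v = (S.down N1).word ((S.mor N1).toFun b)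
    rw [← hq, Morphism.word_append]
    simp
  have hpreDNu : ∀ b : S.alph (N1 + 1), (S.down N1).toFun u <+: τ.toFun b := by
    intro b
    obtain ⟨q, hq⟩ := (hprop b).1
    refine ⟨(S.down N1).word q, ?_⟩
    show (S.down N1).toFun u ++ (S.down N1).word q = (S.down N1).word ((S.mor N1).toFun b)
    rw [← hq, Morphism.word_append]
    simp
  have hblk2 : ∀ b : S.alph (N1 + 1), m ≤ (τ.toFun b).length :=
    fun b => le_trans (hblk v) (hsufDNv b).length_le
  -- the factorization of x at level N1+1
  obtain ⟨k, y, -, hxy⟩ := hx (N1 + 1)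
  obtain ⟨j, hj1, hj2⟩ := τ.exists_block y (i + k)
  have hw : subword x i m = subword (τ.seq y) (i + k) m := by
    rw [hxy, subword_shiftZ]
  -- the subword sits inside two consecutive blocks
  have h2blk : subword (τ.seq y) (i + k) m <:+: τ.toFun (y j) ++ τ.toFun (y (j + 1)) := by
    have hmaster := τ.subword_seq y d0 2 j
    have hsub2 : subword y j 2 = [y j, y (j + 1)] := by
      rw [show (2 : ℕ) = 1 + 1 from rfl, subword_succ, subword_succ, subword_zero]
    rw [hsub2] at hmaster
    have hword2 : τ.word [y j, y (j + 1)] = τ.toFun (y j) ++ τ.toFun (y (j + 1)) := by simp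
    rw [hword2] at hmaster
    have hc1 := τ.cut_succ y j
    have hc2 := τ.cut_succ y (j + 1)
    have hlen2 := hblk2 (y (j + 1))
    calc subword (τ.seq y) (i + k) m
        <:+: subword (τ.seq y) (τ.cut y j) ((τ.toFun (y j) ++ τ.toFun (y (j + 1))).length) := by
          apply subword_infix _ hj1
          rw [List.length_append]
          push_cast
          omega
      _ = τ.toFun (y j) ++ τ.toFun (y (j + 1)) := hmaster
  rw [hw]
  rcases infix_append_cases h2blk with hcase | hcase | ⟨s, t, hst, hsufs, hpret⟩
  · exact ⟨N1 + 1, y j, hcase⟩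
  · exact ⟨N1 + 1, y (j + 1), hcase⟩
  -- the split case: use properness
  have hslen : s.length ≤ m ∧ t.length ≤ m := by
    have := congrArg List.length hst
    simp only [List.length_append, subword_length] at this
    omega
  have hsv : s <:+ (S.down N1).toFun v :=
    suffix_of_suffix_length_le' hsufs (hsufDNv (y j)) (le_trans hslen.1 (hblk v))
  have htu : t <+: (S.down N1).toFun u :=
    prefix_of_prefix_length_le' hpret (hpreDNu (y (j + 1))) (le_trans hslen.2 (hblk u))
  -- w is an infix of (down N1).word [v, u]
  have hw2 : subword (τ.seq y) (i + k) m <:+: (S.down N1).word [v, u] := by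
    obtain ⟨q1, hq1⟩ := hsv
    obtain ⟨r1, hr1⟩ := htu
    refine ⟨q1, r1, ?_⟩
    rw [hst, show (S.down N1).word [v, u] =
      (S.down N1).toFun v ++ (S.down N1).toFun u from by simp, ← hq1, ← hr1]
    simp [List.append_assoc]
  -- find a single letter a at a high level whose image contains [v, u]
  haveI : Nonempty (S.alph (N1 + 1)) := hNE _
  set C := Finset.univ.sup (fun b : S.alph (N1 + 1) => ((S.down (N1 + 1)).toFun b).length)
    with hC
  have hCb : ∀ b : S.alph (N1 + 1), ((S.down (N1 + 1)).toFun b).length ≤ C :=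
    fun b => Finset.le_sup (f := fun b : S.alph (N1 + 1) => ((S.down (N1 + 1)).toFun b).length)
      (Finset.mem_univ b)
  obtain ⟨N0, hN0⟩ := hEG (C + 1)
  obtain ⟨L, hL⟩ : ∃ L, max N0 (N1 + 2) = (N1 + 1) + L := ⟨max N0 (N1 + 2) - (N1 + 1), by omega⟩
  obtain ⟨a⟩ := hNE ((N1 + 1) + L)
  set W := (S.seg (N1 + 1) L).toFun a with hW
  have hWlen : 2 ≤ W.length := by
    have h1 := hN0 ((N1 + 1) + L) (by omega) a
    have h2 : ((S.down ((N1 + 1) + L)).toFun a).length ≤ C * W.length := by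
      rw [S.down_add (N1 + 1) L]
      exact (S.down (N1 + 1)).word_length_le hCb W
    by_contra hlt
    push_neg at hlt
    have h3 : C * W.length ≤ C := by
      calc C * W.length ≤ C * 1 := Nat.mul_le_mul_left C (by omega)
      _ = C := Nat.mul_one C
    omega
  obtain ⟨b1, W1, hW1⟩ : ∃ b1 W1, W = b1 :: W1 := by
    cases hWc : W with
    | nil => rw [hWc] at hWlen; simp at hWlen
    | cons a b => exact ⟨a, b, rfl⟩
  obtain ⟨b2, rest, hW2⟩ : ∃ b2 rest, W1 = b2 :: rest := by
    cases hWc : W1 with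
    | nil => rw [hW1, hWc] at hWlen; simp at hWlen
    | cons a b => exact ⟨a, b, rfl⟩
  have hWe : W = b1 :: b2 :: rest := by rw [hW1, hW2]
  have hvu : [v, u] <:+: (S.mor N1).word W := by
    obtain ⟨q, hq⟩ := (hprop b1).2
    obtain ⟨t2, ht2⟩ := (hprop b2).1
    refine ⟨q, t2 ++ (S.mor N1).word rest, ?_⟩
    rw [hWe]
    simp only [Morphism.word_cons]
    rw [← hq, ← ht2]
    simp [List.append_assoc]
  have hchain1 : (S.down N1).word [v, u] <:+: (S.down N1).word ((S.mor N1).word W) :=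
    (S.down N1).word_infix hvu
  have heq1 : (S.down (N1 + 1)).word W = (S.down N1).word ((S.mor N1).word W) := by
    rw [S.down_succ]
    exact Morphism.comp_word _ _ _
  have heq2 : (S.down (N1 + 1)).word W = (S.down ((N1 + 1) + L)).toFun a := by
    rw [S.down_add (N1 + 1) L]
    rfl
  refine ⟨(N1 + 1) + L, a, List.IsInfix.trans hw2 ?_⟩
  rw [← heq2, heq1]
  exact hchain1

end DirectiveSeq

end SAdicPaper
namespace SAdicPaper

namespace DirectiveSeq

variable {A0 : Type}

theorem X0_subset_inter (S : DirectiveSeq A0) (hpr : S.Proper) :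
    S.X0 ⊆ ⋂ N : ℕ, morphImage (S.down N) Set.univ := by
  classical
  have hNE : ∀ k, Nonempty (S.alph k) := S.alph_nonempty hpr
  obtain ⟨d0⟩ := S.A0_nonempty hpr
  intro x hx
  rw [Set.mem_iInter]
  intro N
  letI tA : TopologicalSpace A0 := ⊥
  haveI : DiscreteTopology A0 := ⟨rfl⟩
  letI tN : TopologicalSpace (S.alph N) := ⊥
  haveI : DiscreteTopology (S.alph N) := ⟨rfl⟩
  have hclosed : IsClosed (morphImage (S.down N) Set.univ) := (S.down N).morphImage_closed
  set B := Finset.sup (Finset.range N)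
    (fun M => Finset.univ.sup (fun a : S.alph M => ((S.down M).toFun a).length)) with hB
  have hwin : ∀ m0 : ℕ, ∃ z ∈ morphImage (S.down N) Set.univ,
      ∀ i : ℤ, -(m0 : ℤ) ≤ i → i ≤ (m0 : ℤ) → z i = x i := by
    intro m0
    set m := max m0 B with hm
    obtain ⟨M, a, hMa⟩ := hx (-(m : ℤ)) (2 * m + 1)
    have hinf := hMa.length_le
    rw [subword_length] at hinf
    have hMN : N ≤ M := by
      by_contra hlt
      push_neg at hlt
      have h1 : ((S.down M).toFun a).length ≤ B :=
        le_trans (Finset.le_sup (f := fun a : S.alph M => ((S.down M).toFun a).length)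
          (Finset.mem_univ a))
          (Finset.le_sup (f := fun M => Finset.univ.sup
            (fun a : S.alph M => ((S.down M).toFun a).length)) (Finset.mem_range.mpr hlt))
      omega
    obtain ⟨L, rfl⟩ := Nat.exists_eq_add_of_le hMN
    set W := (S.seg N L).toFun a with hW
    have hWa : (S.down (N + L)).toFun a = (S.down N).word W := by
      rw [S.down_add N L]; rfl
    rw [hWa] at hMa
    obtain ⟨l, r, hlr⟩ := hMa
    obtain ⟨cA⟩ := hNE N
    set y : ℤ → S.alph N := fun j => W.getD j.toNat cA with hy
    have hyW : subword y 0 W.length = W := by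
      apply subword_eq_of_getD _ _ _ cA
      intro t ht
      show W.getD (0 + (t : ℤ)).toNat cA = W.getD t cA
      congr 1
      omega
    have hmaster := (S.down N).subword_seq y d0 W.length 0
    rw [hyW, Morphism.cut_zero] at hmaster
    have hpoint : ∀ s : ℕ, s < ((S.down N).word W).length →
        (S.down N).seq y (s : ℤ) = ((S.down N).word W).getD s d0 := by
      intro s hs
      rw [← hmaster, subword_getD _ _ _ hs d0]
      norm_num
    refine ⟨shiftZ ((l.length : ℤ) + m) ((S.down N).seq y),
      ⟨(l.length : ℤ) + m, y, Set.mem_univ y, rfl⟩, ?_⟩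
    intro i hi1 hi2
    rw [shiftZ_apply]
    set t : ℕ := (i + m).toNat with htdef
    have ht : (t : ℤ) = i + m := Int.toNat_of_nonneg (by omega)
    have htm : t < 2 * m + 1 := by omega
    have hidx : i + ((l.length : ℤ) + m) = ((l.length + t : ℕ) : ℤ) := by push_cast; omega
    rw [hidx]
    have hlen : l.length + t < ((S.down N).word W).length := by
      rw [← hlr]
      simp only [List.length_append, subword_length]
      omega
    rw [hpoint _ hlen, ← hlr, List.append_assoc,
      List.getD_append_right _ _ d0 _ (by omega), Nat.add_sub_cancel_left,
      List.getD_append _ _ d0 _ (by rw [subword_length]; omega),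
      subword_getD _ _ _ (by omega : t < 2 * m + 1) d0]
    congr 1
    omega
  -- closure argument
  have hxcl : x ∈ closure (morphImage (S.down N) Set.univ) := by
    rw [mem_closure_iff]
    intro O hO hxO
    obtain ⟨I, us, hus, hsub⟩ := isOpen_pi_iff.mp hO x hxO
    obtain ⟨z, hz, hzx⟩ := hwin (I.sup fun i : ℤ => i.natAbs)
    refine ⟨z, ?_, hz⟩
    apply hsub
    rw [Set.mem_pi]
    intro i hiI
    have hb : i.natAbs ≤ I.sup (fun i : ℤ => i.natAbs) :=
      Finset.le_sup (f := fun i : ℤ => i.natAbs) hiI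
    rw [hzx i (by omega) (by omega)]
    exact (hus i hiI).2
  rwa [hclosed.closure_eq] at hxcl

theorem key (S : DirectiveSeq A0) (hEG : S.EverywhereGrowing) (hpr : S.Proper) :
    S.X0 = ⋂ N : ℕ, morphImage (S.down N) Set.univ :=
  Set.Subset.antisymm (S.X0_subset_inter hpr) (S.inter_subset_X0 hEG hpr)

end DirectiveSeq

end SAdicPaper

namespace SAdicPaper

/-- for an everywhere growing and proper directive sequence,
`X_σ^{(n)} = ⋂_{N>n} ⋃_{k∈ℤ} T^k σ_{[n,N)}(A_N^ℤ)` for every `n`. -/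
theorem statement9 {A : Type} [Fintype A] (S : DirectiveSeq A)
    (hEG : S.EverywhereGrowing) (hproper : S.Proper) :
    S.X0 = ⋂ N : ℕ, morphImage (S.down N) Set.univ ∧
      ∀ n : ℕ, S.levelSet n = ⋂ N : ℕ, morphImage (S.seg n (N + 1)) Set.univ := by
  refine ⟨S.key hEG hproper, fun n => ?_⟩
  rw [← S.tail_X0 n,
    (S.tail n).key (S.tail_everywhereGrowing n hEG hproper) (S.tail_proper n hproper)]
  exact Set.iInter_congr fun N => by rw [S.tail_down n N]; rfl

end SAdicPaper
end

section
/- Let π: (X,T) → (Y,T) be a factor map between compact metric topological dynamical systems with (Y,T) minimal, and let K ≥ 1 be an integer. Suppose that for every y ∈ Y there exists u ∈ E(2^X,T) such that #(u∘π^{-1}(y)) ≤ K. Then π is almost k-to-1 for some k ≤ K. -/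
namespace SAdicPaper

open TopologicalSpace

/-- `T^n` for a homeomorphism `T`. -/
def homPow {X : Type} [TopologicalSpace X] (T : X ≃ₜ X) : ℕ → (X ≃ₜ X)
  | 0 => Homeomorph.refl X
  | n + 1 => (homPow T n).trans T

/-- `T^k`, `k ∈ ℤ`, for a homeomorphism `T`. -/
def homZPow {X : Type} [TopologicalSpace X] (T : X ≃ₜ X) : ℤ → (X ≃ₜ X)
  | Int.ofNat n => homPow T n
  | Int.negSucc n => (homPow T (n + 1)).symm

/-- The action induced by `T` on the hyperspace `2^X`, `A ↦ T(A)`. -/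
def hyperImage {X : Type} [MetricSpace X] (T : X ≃ₜ X) (A : NonemptyCompacts X) :
    NonemptyCompacts X :=
  ⟨⟨T '' (A : Set X), A.isCompact.image T.continuous⟩, A.nonempty.image _⟩

/-- The Ellis semigroup `E(2^X, T)` of the hyperspace system: the closure, in the product
topology of `(2^X)^(2^X)` (with `2^X` carrying the Hausdorff metric), of the set of
powers of the map induced by `T` on the hyperspace. -/
def Ellis2 {X : Type} [MetricSpace X] (T : X ≃ₜ X) :
    Set (NonemptyCompacts X → NonemptyCompacts X) :=
  closure {f | ∃ k : ℤ, f = hyperImage (homZPow T k)}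

section Statement16Aux

variable {X Y : Type} [MetricSpace X] [CompactSpace X] [MetricSpace Y] [CompactSpace Y]
  (T : X ≃ₜ X) (Sy : Y ≃ₜ Y) (π : X → Y)

private lemma homPow_comm (hcomm : ∀ x, π (T x) = Sy (π x)) (n : ℕ) (x : X) :
    π (homPow T n x) = homPow Sy n (π x) := by
  induction n with
  | zero => rfl
  | succ n ih =>
    show π (T (homPow T n x)) = Sy (homPow Sy n (π x))
    rw [hcomm, ih]

private lemma homZPow_comm (hcomm : ∀ x, π (T x) = Sy (π x)) (k : ℤ) (x : X) :
    π (homZPow T k x) = homZPow Sy k (π x) := by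
  cases k with
  | ofNat n => exact homPow_comm T Sy π hcomm n x
  | negSucc n =>
    show π ((homPow T (n + 1)).symm x) = (homPow Sy (n + 1)).symm (π x)
    have h := homPow_comm T Sy π hcomm (n + 1) ((homPow T (n + 1)).symm x)
    rw [Homeomorph.apply_symm_apply] at h
    rw [h, Homeomorph.symm_apply_apply]

private lemma fiber_shift (hcomm : ∀ x, π (T x) = Sy (π x)) (k : ℤ) (y : Y) :
    π ⁻¹' {homZPow Sy k y} = homZPow T k '' (π ⁻¹' {y}) := by
  ext x
  simp only [Set.mem_preimage, Set.mem_singleton_iff, Set.mem_image]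
  constructor
  · intro h
    refine ⟨(homZPow T k).symm x, ?_, (homZPow T k).apply_symm_apply x⟩
    have h2 := homZPow_comm T Sy π hcomm k ((homZPow T k).symm x)
    rw [(homZPow T k).apply_symm_apply] at h2
    exact (homZPow Sy k).injective (h2.symm.trans h)
  · rintro ⟨w, hw, rfl⟩
    rw [homZPow_comm T Sy π hcomm, hw]

/-- The set of `y` whose fiber is covered by `n` balls of radius `ε`. -/
private def cov (n : ℕ) (ε : ℝ) : Set Y :=
  {y : Y | ∃ P : Finset X, P.card ≤ n ∧ π ⁻¹' {y} ⊆ ⋃ p ∈ P, Metric.ball p ε}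

private lemma isOpen_cov (hcont : Continuous π) (n : ℕ) (ε : ℝ) : IsOpen (cov π n ε) := by
  rw [isOpen_iff_forall_mem_open]
  rintro y ⟨P, hPc, hPs⟩
  have hUopen : IsOpen (⋃ p ∈ P, Metric.ball p ε) :=
    isOpen_iUnion fun p => isOpen_iUnion fun _ => Metric.isOpen_ball
  have hCcl : IsClosed (π '' (⋃ p ∈ P, Metric.ball p ε)ᶜ) :=
    (hUopen.isClosed_compl.isCompact.image hcont).isClosed
  refine ⟨(π '' (⋃ p ∈ P, Metric.ball p ε)ᶜ)ᶜ, fun z hz => ⟨P, hPc, fun x hx => ?_⟩,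
    hCcl.isOpen_compl, fun h => ?_⟩
  · by_contra hxU
    exact hz ⟨x, hxU, by simpa using hx⟩
  · obtain ⟨x, hxc, hxy⟩ := h
    exact hxc (hPs (by simp [hxy]))

private lemma mem_cov_of_encard_le {n : ℕ} {y : Y} (hy : (π ⁻¹' {y}).encard ≤ (n : ℕ∞))
    {ε : ℝ} (hε : 0 < ε) : y ∈ cov π n ε := by
  have hfin : (π ⁻¹' {y}).Finite := Set.finite_of_encard_le_coe hy
  refine ⟨hfin.toFinset, ?_, fun x hx => ?_⟩
  · rw [← Set.ncard_eq_toFinset_card _ hfin]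
    exact (Set.encard_le_coe_iff_finite_ncard_le.mp hy).2
  · exact Set.mem_iUnion₂.mpr ⟨x, hfin.mem_toFinset.mpr hx, Metric.mem_ball_self hε⟩

private lemma encard_le_of_cov {n : ℕ} {y : Y}
    (h : ∀ m : ℕ, y ∈ cov π n (1 / (m + 1))) : (π ⁻¹' {y}).encard ≤ (n : ℕ∞) := by
  classical
  by_contra hlt
  rw [not_le] at hlt
  have h1 : ((n : ℕ∞) + 1) ≤ (π ⁻¹' {y}).encard := Order.add_one_le_of_lt hlt
  obtain ⟨t, hts, htc⟩ := Set.exists_subset_encard_eq h1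
  have htc' : t.encard = ((n + 1 : ℕ) : ℕ∞) := by rw [htc]; push_cast; ring
  have htfin : t.Finite := Set.finite_of_encard_le_coe htc'.le
  have hcard : htfin.toFinset.card = n + 1 := by
    have h2 := htfin.encard_eq_coe_toFinset_card
    rw [htc'] at h2
    exact_mod_cast h2.symm
  rcases Nat.eq_zero_or_pos n with rfl | hn
  · obtain ⟨P, hP0, hPs⟩ := h 0
    have hPempty : P = ∅ := Finset.card_eq_zero.mp (Nat.le_zero.mp hP0)
    obtain ⟨x, hx⟩ : t.Nonempty := Set.encard_ne_zero.mp (by rw [htc']; simp)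
    have := hPs (hts hx)
    simp [hPempty] at this
  · set sf := htfin.toFinset with hsf
    have h2 : 1 < sf.card := by omega
    obtain ⟨a₀, ha₀, b₀, hb₀, hab₀⟩ := Finset.one_lt_card.mp h2
    have hne : (sf.offDiag.image fun p => dist p.1 p.2).Nonempty :=
      ⟨dist a₀ b₀, Finset.mem_image.mpr ⟨(a₀, b₀), Finset.mem_offDiag.mpr ⟨ha₀, hb₀, hab₀⟩, rfl⟩⟩
    set δ := (sf.offDiag.image fun p => dist p.1 p.2).min' hne with hδ
    have hδpos : 0 < δ := by
      obtain ⟨p, hp, hpd⟩ := Finset.mem_image.mp ((sf.offDiag.image _).min'_mem hne)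
      rw [hδ, ← hpd]
      exact dist_pos.mpr (Finset.mem_offDiag.mp hp).2.2
    obtain ⟨m, hm⟩ := exists_nat_gt (2 / δ)
    have hm1 : (0 : ℝ) < (m : ℝ) + 1 := by positivity
    have hmδ : 2 * (1 / ((m : ℝ) + 1)) < δ := by
      rw [mul_one_div, div_lt_iff₀ hm1]
      rw [div_lt_iff₀ hδpos] at hm
      nlinarith
    obtain ⟨P, hPc, hPs⟩ := h m
    have hex : ∀ x ∈ sf, ∃ p ∈ P, x ∈ Metric.ball p (1 / ((m : ℝ) + 1)) := by
      intro x hx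
      have hxf := hPs (hts (htfin.mem_toFinset.mp hx))
      simpa using hxf
    set f : X → X := fun x =>
      if hx : ∃ p ∈ P, x ∈ Metric.ball p (1 / ((m : ℝ) + 1)) then hx.choose else x with hf
    have hmaps : ∀ x ∈ sf, f x ∈ P ∧ dist x (f x) < 1 / ((m : ℝ) + 1) := by
      intro x hx
      have hexx := hex x hx
      simp only [hf, dif_pos hexx]
      obtain ⟨hp, hb⟩ := hexx.choose_spec
      exact ⟨hp, Metric.mem_ball.mp hb⟩
    have hcard' : P.card < sf.card := by omega
    obtain ⟨a, ha, b, hb, hab, hfab⟩ :=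
      Finset.exists_ne_map_eq_of_card_lt_of_maps_to hcard' fun x hx => (hmaps x hx).1
    have hδle : δ ≤ dist a b :=
      Finset.min'_le _ _ (Finset.mem_image.mpr
        ⟨(a, b), Finset.mem_offDiag.mpr ⟨ha, hb, hab⟩, rfl⟩)
    have hlt2 : dist a b < 2 * (1 / ((m : ℝ) + 1)) := by
      have hcfb : dist (f a) b = dist b (f b) := by rw [hfab, dist_comm]
      calc dist a b ≤ dist a (f a) + dist (f a) b := dist_triangle _ _ _
        _ = dist a (f a) + dist b (f b) := by rw [hcfb]
        _ < 1 / ((m : ℝ) + 1) + 1 / ((m : ℝ) + 1) :=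
            add_lt_add (hmaps a ha).2 (hmaps b hb).2
        _ = 2 * (1 / ((m : ℝ) + 1)) := by ring
    linarith

end Statement16Aux

/-- if `π : (X,T) → (Y,S)` is a factor map between compact metric systems
with `(Y,S)` minimal and, for every `y`, the fiber `π⁻¹(y)` can be collapsed to at most
`K` points by some element `u` of the Ellis semigroup of the hyperspace, then `π` is
almost `k`-to-`1` for some `k ≤ K`. -/
theorem statement16 {X Y : Type} [MetricSpace X] [CompactSpace X]
    [MetricSpace Y] [CompactSpace Y]
    (T : X ≃ₜ X) (Sy : Y ≃ₜ Y)
    (π : X → Y) (hcont : Continuous π) (hsurj : Function.Surjective π)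
    (hcomm : ∀ x, π (T x) = Sy (π x))
    (hmin : ∀ y : Y, Dense {z : Y | ∃ k : ℤ, z = homZPow Sy k y})
    (K : ℕ) (hK : 1 ≤ K)
    (hyp : ∀ y : Y, ∃ u ∈ Ellis2 T, ∀ F : NonemptyCompacts X,
      (F : Set X) = π ⁻¹' {y} → ((u F : Set X)).encard ≤ (K : ℕ∞)) :
    ∃ k ≤ K, ∃ R ∈ residual Y, ∀ y ∈ R, (π ⁻¹' {y}).encard = (k : ℕ∞) := by
  classical
  rcases isEmpty_or_nonempty Y with hY | hY
  · exact ⟨K, le_refl K, Set.univ, Filter.univ_mem, fun y _ => (IsEmpty.false y).elim⟩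
  have hfibne : ∀ y : Y, (π ⁻¹' {y}).Nonempty := fun y => by
    obtain ⟨x, hx⟩ := hsurj y; exact ⟨x, by simp [hx]⟩
  have hfibcp : ∀ y : Y, IsCompact (π ⁻¹' {y}) := fun y =>
    (isClosed_singleton.preimage hcont).isCompact
  -- invariance of the fiber cardinality
  have hinv : ∀ (n : ℕ) (j : ℤ) (y : Y), (π ⁻¹' {y}).encard ≤ (n : ℕ∞) →
      (π ⁻¹' {homZPow Sy j y}).encard ≤ (n : ℕ∞) := by
    intro n j y hy
    rw [fiber_shift T Sy π hcomm, ((homZPow T j).injective.injOn).encard_image]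
    exact hy
  -- density of `cov K ε`
  have hdenseK : ∀ ε : ℝ, 0 < ε → Dense (cov π K ε) := by
    intro ε hε
    rw [dense_iff_inter_open]
    intro U hUopen hUne
    obtain ⟨y', hy'⟩ := hUne
    have hcovU : Set.univ ⊆ ⋃ j : ℤ, (homZPow Sy j) ⁻¹' U := by
      intro z _
      obtain ⟨w, ⟨j, rfl⟩, hw⟩ := (hmin z).exists_mem_open hUopen ⟨y', hy'⟩
      exact Set.mem_iUnion.mpr ⟨j, hw⟩
    obtain ⟨Fj, hFj⟩ := isCompact_univ.elim_finite_subcover _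
      (fun j : ℤ => hUopen.preimage (homZPow Sy j).continuous) hcovU
    have hFne : Fj.Nonempty := by
      obtain ⟨j, hj, _⟩ := Set.mem_iUnion₂.mp (hFj (Set.mem_univ y'))
      exact ⟨j, hj⟩
    have hd : ∀ j : ℤ, ∃ δ > 0, ∀ x x' : X, dist x x' < δ →
        dist (homZPow T j x) (homZPow T j x') < ε := by
      intro j
      have huc := CompactSpace.uniformContinuous_of_continuous (homZPow T j).continuous
      obtain ⟨δ, hδ, hδ'⟩ := Metric.uniformContinuous_iff.mp huc ε hε
      exact ⟨δ, hδ, fun x x' h => hδ' h⟩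
    choose d hd0 hd' using hd
    set δ := Fj.inf' hFne d with hδdef
    have hδpos : 0 < δ := (Finset.lt_inf'_iff hFne).mpr fun j _ => hd0 j
    obtain ⟨u, hu, hbd⟩ := hyp y'
    set F₀ : NonemptyCompacts X := ⟨⟨π ⁻¹' {y'}, hfibcp y'⟩, hfibne y'⟩ with hF₀
    have hA : ((u F₀ : Set X)).encard ≤ (K : ℕ∞) := hbd F₀ rfl
    have hcl : u F₀ ∈
        closure {B : NonemptyCompacts X | ∃ k : ℤ, B = hyperImage (homZPow T k) F₀} := by
      refine map_mem_closure (f := fun v : NonemptyCompacts X → NonemptyCompacts X => v F₀)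
        (continuous_apply F₀) hu ?_
      rintro f ⟨k, rfl⟩
      exact ⟨k, rfl⟩
    obtain ⟨B, ⟨k, rfl⟩, hBdist⟩ := Metric.mem_closure_iff.mp hcl δ hδpos
    have hApos : ((u F₀ : Set X)).Nonempty := (u F₀).nonempty
    have hedist : EMetric.hausdorffEdist
        ((hyperImage (homZPow T k) F₀ : Set X)) ((u F₀ : Set X)) ≠ ⊤ :=
      Metric.hausdorffEdist_ne_top_of_nonempty_of_bounded
        (hyperImage (homZPow T k) F₀).nonempty hApos
        (hyperImage (homZPow T k) F₀).isCompact.isBounded (u F₀).isCompact.isBounded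
    have hnear : ∀ x ∈ (hyperImage (homZPow T k) F₀ : Set X),
        ∃ a ∈ (u F₀ : Set X), dist x a < δ := by
      intro x hx
      have h1 : Metric.infDist x ((u F₀ : Set X)) ≤
          Metric.hausdorffDist ((hyperImage (homZPow T k) F₀ : Set X)) ((u F₀ : Set X)) :=
        Metric.infDist_le_hausdorffDist_of_mem hx hedist
      have h2 : Metric.hausdorffDist ((hyperImage (homZPow T k) F₀ : Set X))
          ((u F₀ : Set X)) < δ := by
        rw [Metric.hausdorffDist_comm, ← Metric.NonemptyCompacts.dist_eq]
        exact hBdist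
      exact (Metric.infDist_lt_iff hApos).mp (lt_of_le_of_lt h1 h2)
    obtain ⟨j, hjF, hjU⟩ := Set.mem_iUnion₂.mp (hFj (Set.mem_univ (homZPow Sy k y')))
    have hAfin : ((u F₀ : Set X)).Finite := Set.finite_of_encard_le_coe hA
    refine ⟨homZPow Sy j (homZPow Sy k y'), hjU,
      hAfin.toFinset.image (fun a => homZPow T j a), ?_, ?_⟩
    · calc (hAfin.toFinset.image fun a => homZPow T j a).card ≤ hAfin.toFinset.card :=
          Finset.card_image_le
        _ ≤ K := by
          rw [← Set.ncard_eq_toFinset_card _ hAfin]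
          exact (Set.encard_le_coe_iff_finite_ncard_le.mp hA).2
    · have hfib1 : π ⁻¹' {homZPow Sy j (homZPow Sy k y')} =
          homZPow T j '' (π ⁻¹' {homZPow Sy k y'}) := fiber_shift T Sy π hcomm j _
      have hfib2 : π ⁻¹' {homZPow Sy k y'} = (hyperImage (homZPow T k) F₀ : Set X) := by
        rw [fiber_shift T Sy π hcomm k y']; rfl
      rw [hfib1, hfib2]
      rintro x ⟨w, hw, rfl⟩
      obtain ⟨a, ha, hwa⟩ := hnear w hw
      have hδd : δ ≤ d j := Finset.inf'_le _ hjF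
      have hballs : dist (homZPow T j w) (homZPow T j a) < ε :=
        hd' j w a (lt_of_lt_of_le hwa hδd)
      exact Set.mem_iUnion₂.mpr ⟨homZPow T j a,
        Finset.mem_image_of_mem _ (hAfin.mem_toFinset.mpr ha), Metric.mem_ball.mpr hballs⟩
  -- some fiber has at most `K` points
  have hEK : ∃ y : Y, (π ⁻¹' {y}).encard ≤ (K : ℕ∞) := by
    have hdense : Dense (⋂ m : ℕ, cov π K (1 / (m + 1))) :=
      dense_iInter_of_isOpen (fun m => isOpen_cov π hcont K _)
        (fun m => hdenseK _ (by positivity))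
    obtain ⟨y₀, hy₀⟩ := hdense.nonempty
    exact ⟨y₀, encard_le_of_cov π (fun m => Set.mem_iInter.mp hy₀ m)⟩
  have hexnat : ∃ n : ℕ, ∃ y : Y, (π ⁻¹' {y}).encard ≤ (n : ℕ∞) := ⟨K, hEK⟩
  set k := Nat.find hexnat with hkdef
  obtain ⟨yk, hyk⟩ := Nat.find_spec hexnat
  refine ⟨k, Nat.find_min' hexnat hEK, {y : Y | (π ⁻¹' {y}).encard ≤ (k : ℕ∞)}, ?_, ?_⟩
  · rw [mem_residual]
    refine ⟨⋂ m : ℕ, cov π k (1 / (m + 1)), ?_, ?_, ?_⟩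
    · intro y hy
      exact encard_le_of_cov π (fun m => Set.mem_iInter.mp hy m)
    · exact IsGδ.iInter fun m => (isOpen_cov π hcont k _).isGδ
    · refine dense_iInter_of_isOpen (fun m => isOpen_cov π hcont k _) (fun m => ?_)
      have horb : {z : Y | ∃ j : ℤ, z = homZPow Sy j yk} ⊆ cov π k (1 / (m + 1)) := by
        rintro z ⟨j, rfl⟩
        exact mem_cov_of_encard_le π (hinv k j yk hyk) (by positivity)
      exact (hmin yk).mono horb
  · intro y hy
    have hfin := Set.finite_of_encard_le_coe hy
    have hle := (Set.encard_le_coe_iff_finite_ncard_le.mp hy).2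
    have hge : k ≤ (π ⁻¹' {y}).ncard := by
      by_contra hlt
      push_neg at hlt
      have hmem : ∃ y' : Y, (π ⁻¹' {y'}).encard ≤ (((π ⁻¹' {y}).ncard : ℕ) : ℕ∞) :=
        ⟨y, Set.encard_le_coe_iff_finite_ncard_le.mpr ⟨hfin, le_refl _⟩⟩
      have := Nat.find_min' hexnat hmem
      omega
    have hkeq : (π ⁻¹' {y}).ncard = k := le_antisymm hle hge
    have henc : (π ⁻¹' {y}).encard = (((π ⁻¹' {y}).ncard : ℕ) : ℕ∞) := by
      rw [hfin.encard_eq_coe_toFinset_card, Set.ncard_eq_toFinset_card _ hfin]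
    rw [henc, hkeq]

end SAdicPaper
end

section
/- Let π: (X,T) → (Y,T) be a factor map between minimal subshifts. Then either π is distal, or there exists y ∈ Y such that the fiber π^{-1}(y) contains two distinct points forming a right asymptotic or left asymptotic pair. -/
namespace SAdicPaper

private lemma shiftZ_add' {A : Type*} (a b : ℤ) (x : ℤ → A) :
    shiftZ a (shiftZ b x) = shiftZ (a + b) x := by
  funext n; simp only [shiftZ]; rw [add_assoc]

private lemma shiftZ_zero' {A : Type*} (x : ℤ → A) : shiftZ 0 x = x := by
  funext n; simp [shiftZ]

private lemma shiftZ_mem' {A : Type*} [TopologicalSpace A] {X : Set (ℤ → A)}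
    (hX : IsSubshift X) (k : ℤ) {x : ℤ → A} (hx : x ∈ X) : shiftZ k x ∈ X := by
  have h := hX.2 k
  rw [← h]
  exact Set.mem_image_of_mem _ hx

private lemma factor_shiftZ' {A B : Type*} [TopologicalSpace A] [TopologicalSpace B]
    {X : Set (ℤ → A)} {Y : Set (ℤ → B)} {π : (ℤ → A) → (ℤ → B)}
    (hX : IsSubshift X) (hπ : IsFactorMap X Y π) :
    ∀ x ∈ X, ∀ k : ℤ, π (shiftZ k x) = shiftZ k (π x) := by
  have hnat : ∀ (n : ℕ), ∀ x ∈ X, π (shiftZ (n : ℤ) x) = shiftZ (n : ℤ) (π x) := by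
    intro n
    induction n with
    | zero => intro x hx; simp [shiftZ_zero']
    | succ n ih =>
      intro x hx
      have h1 : shiftZ ((n + 1 : ℕ) : ℤ) x = shift (shiftZ (n : ℤ) x) := by
        funext m; simp only [shiftZ, shift]; congr 1; push_cast; ring
      rw [h1, hπ.2.2 _ (shiftZ_mem' hX _ hx), ih x hx]
      funext m; simp only [shiftZ, shift]; congr 1; push_cast; ring
  intro x hx k
  rcases le_or_gt 0 k with h | h
  · obtain ⟨n, rfl⟩ := Int.eq_ofNat_of_zero_le h
    exact hnat n x hx
  · obtain ⟨n, rfl⟩ : ∃ n : ℕ, k = -(n : ℤ) := ⟨k.natAbs, by omega⟩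
    have hw : shiftZ (-(n : ℤ)) x ∈ X := shiftZ_mem' hX _ hx
    have h1 : shiftZ (n : ℤ) (shiftZ (-(n : ℤ)) x) = x := by
      rw [shiftZ_add']; simp [shiftZ_zero']
    have h2 := hnat n _ hw
    rw [h1] at h2
    have h3 := congrArg (shiftZ (-(n : ℤ))) h2
    rw [shiftZ_add', neg_add_cancel, shiftZ_zero'] at h3
    exact h3.symm

/-- a factor map between minimal subshifts is either distal or some fiber
contains two distinct points forming a right or left asymptotic pair. -/
theorem statement18 {A B : Type} [Fintype A] [TopologicalSpace A] [DiscreteTopology A]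
    [Fintype B] [TopologicalSpace B] [DiscreteTopology B]
    (X : Set (ℤ → A)) (Y : Set (ℤ → B))
    (hX : IsMinimalSubshift X) (hY : IsMinimalSubshift Y)
    (π : (ℤ → A) → (ℤ → B)) (hπ : IsFactorMap X Y π) :
    IsDistalFactor X π ∨
      ∃ y ∈ Y, ∃ x ∈ X, ∃ x' ∈ X, π x = y ∧ π x' = y ∧ x ≠ x' ∧
        (RightAsymptotic x x' ∨ LeftAsymptotic x x') := by
  by_cases hdist : IsDistalFactor X π
  · exact Or.inl hdist
  right
  rw [IsDistalFactor] at hdist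
  push_neg at hdist
  obtain ⟨x, hx, x', hx', hπxx, hne, hprox⟩ := hdist
  have hne0 : ∃ n : ℤ, x n ≠ x' n := Function.ne_iff.mp hne
  by_cases hb : ∃ b : ℤ, ∀ n : ℤ, b < n → x n = x' n
  · -- differences bounded above: right asymptotic pair
    obtain ⟨b, hbb⟩ := hb
    obtain ⟨dd, hd1, hd2⟩ := Int.exists_greatest_of_bdd (P := fun n => x n ≠ x' n)
      ⟨b, fun z hz => by by_contra h; exact hz (hbb z (by omega))⟩ hne0
    refine ⟨π x, ?_, x, hx, x', hx', rfl, hπxx.symm, hne, Or.inl ⟨dd, ?_, ?_⟩⟩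
    · rw [← hπ.2.1]; exact Set.mem_image_of_mem _ hx
    · intro n hn
      simp only [shiftZ]
      by_contra h
      have := hd2 _ h
      omega
    · simpa [shiftZ] using hd1
  · -- differences unbounded above: extract a left asymptotic pair
    push_neg at hb
    choose k hk using hprox
    have hdm : ∀ m : ℕ, ∃ dd : ℤ, ((k m + (m : ℤ) < dd ∧ x dd ≠ x' dd) ∧
        ∀ z : ℤ, (k m + (m : ℤ) < z ∧ x z ≠ x' z) → dd ≤ z) := by
      intro m
      obtain ⟨n, hn1, hn2⟩ := hb (k m + (m : ℤ))
      exact Int.exists_least_of_bdd (P := fun z => k m + (m : ℤ) < z ∧ x z ≠ x' z)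
        ⟨k m + (m : ℤ), fun z hz => le_of_lt hz.1⟩ ⟨n, hn1, hn2⟩
    choose d hd using hdm
    have hagree : ∀ m : ℕ, ∀ n : ℤ, -(2 * (m : ℤ)) ≤ n → n < 0 →
        x (n + d m) = x' (n + d m) := by
      intro m n h1 h2
      have hdm1 := (hd m).1
      have hdm2 := (hd m).2
      by_cases hc : n + d m ≤ k m + (m : ℤ)
      · have h3 := hk m (n + d m - k m) (abs_le.mpr ⟨by omega, by omega⟩)
        have e : k m + (n + d m - k m) = n + d m := by ring
        rwa [e] at h3
      · by_contra hne2
        have := hdm2 (n + d m) ⟨by omega, hne2⟩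
        omega
    set p : ℕ → (ℤ → A) × (ℤ → A) := fun m => (shiftZ (d m) x, shiftZ (d m) x') with hp
    have hXcl : IsClosed X := hX.1.1
    have hcomp : IsCompact (X ×ˢ X) := hXcl.isCompact.prod hXcl.isCompact
    have hmemp : ∀ m, p m ∈ X ×ˢ X := fun m =>
      ⟨shiftZ_mem' hX.1 _ hx, shiftZ_mem' hX.1 _ hx'⟩
    have hle : Filter.map p Filter.atTop ≤ Filter.principal (X ×ˢ X) :=
      Filter.le_principal_iff.mpr (Filter.mem_map.mpr
        (Filter.Eventually.of_forall hmemp))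
    obtain ⟨zz, hzz, hcl⟩ := hcomp.exists_clusterPt hle
    have hfreq : ∀ U ∈ nhds zz, ∀ M : ℕ, ∃ m, M ≤ m ∧ p m ∈ U := by
      intro U hU M
      have h1 : ∃ᶠ m in Filter.atTop, p m ∈ U := mapClusterPt_iff_frequently.mp hcl U hU
      obtain ⟨m, hm1, hm2⟩ := (Filter.frequently_atTop.mp h1) M
      exact ⟨m, hm1, hm2⟩
    obtain ⟨hz, hz'⟩ := hzz
    set z := zz.1 with hzdef
    set z' := zz.2 with hz'def
    have hopen : ∀ (n : ℤ) (a a' : A),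
        IsOpen {w : (ℤ → A) × (ℤ → A) | w.1 n = a ∧ w.2 n = a'} := by
      intro n a a'
      have hc1 : Continuous fun w : (ℤ → A) × (ℤ → A) => w.1 n :=
        (continuous_apply n).comp continuous_fst
      have hc2 : Continuous fun w : (ℤ → A) × (ℤ → A) => w.2 n :=
        (continuous_apply n).comp continuous_snd
      exact IsOpen.inter
        (hc1.isOpen_preimage ({a} : Set A) (isOpen_discrete _))
        (hc2.isOpen_preimage ({a'} : Set A) (isOpen_discrete _))
    have hb0 : z 0 ≠ z' 0 := by
      obtain ⟨m, _, hm⟩ := hfreq _ (IsOpen.mem_nhds (hopen 0 (z 0) (z' 0)) ⟨rfl, rfl⟩) 0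
      intro h
      apply (hd m).1.2
      have e1 : (p m).1 0 = x (0 + d m) := rfl
      have e2 : (p m).2 0 = x' (0 + d m) := rfl
      have : x (0 + d m) = x' (0 + d m) := by rw [← e1, ← e2, hm.1, hm.2, h]
      simpa using this
    have hleft : ∀ n : ℤ, n < 0 → z n = z' n := by
      intro n hn
      obtain ⟨m, hM, hm⟩ :=
        hfreq _ (IsOpen.mem_nhds (hopen n (z n) (z' n)) ⟨rfl, rfl⟩) n.natAbs
      have hag := hagree m n (by omega) hn
      have e1 : (p m).1 n = x (n + d m) := rfl
      have e2 : (p m).2 n = x' (n + d m) := rfl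
      rw [← hm.1, ← hm.2, e1, e2, hag]
    have hπz : π z = π z' := by
      funext n
      have hc1 : ContinuousWithinAt π X z := hπ.1 z hz
      have hc2 : ContinuousWithinAt π X z' := hπ.1 z' hz'
      have hV1 : π ⁻¹' {u : ℤ → B | u n = π z n} ∈ nhdsWithin z X := by
        apply hc1
        have e : {u : ℤ → B | u n = π z n} = (fun u : ℤ → B => u n) ⁻¹' {π z n} := rfl
        rw [e]
        exact IsOpen.mem_nhds ((isOpen_discrete _).preimage (continuous_apply n)) rfl
      have hV2 : π ⁻¹' {u : ℤ → B | u n = π z' n} ∈ nhdsWithin z' X := by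
        apply hc2
        have e : {u : ℤ → B | u n = π z' n} = (fun u : ℤ → B => u n) ⁻¹' {π z' n} := rfl
        rw [e]
        exact IsOpen.mem_nhds ((isOpen_discrete _).preimage (continuous_apply n)) rfl
      obtain ⟨W1, hW1o, hW1z, hW1⟩ := mem_nhdsWithin.mp hV1
      obtain ⟨W2, hW2o, hW2z, hW2⟩ := mem_nhdsWithin.mp hV2
      have hU : W1 ×ˢ W2 ∈ nhds zz :=
        IsOpen.mem_nhds (hW1o.prod hW2o) ⟨hW1z, hW2z⟩
      obtain ⟨m, _, hm⟩ := hfreq _ hU 0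
      have h1 : π ((p m).1) n = π z n := hW1 ⟨hm.1, (hmemp m).1⟩
      have h2 : π ((p m).2) n = π z' n := hW2 ⟨hm.2, (hmemp m).2⟩
      have h3 : π ((p m).1) = π ((p m).2) := by
        show π (shiftZ (d m) x) = π (shiftZ (d m) x')
        rw [factor_shiftZ' hX.1 hπ x hx, factor_shiftZ' hX.1 hπ x' hx', hπxx]
      rw [← h1, h3, h2]
    refine ⟨π z, ?_, z, hz, z', hz', rfl, hπz.symm, ?_, Or.inr ⟨0, ?_, ?_⟩⟩
    · rw [← hπ.2.1]; exact Set.mem_image_of_mem _ hz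
    · intro h; exact hb0 (congrFun h 0)
    · intro n hn; simpa [shiftZ] using hleft n hn
    · simpa [shiftZ] using hb0

end SAdicPaper
end

section
/- Let X ⊆ A^ℤ be an aperiodic subshift having at most L right asymptotic tails and at most L left asymptotic tails. Then X has at most 2L²·(#A)² centered asymptotic pairs (counting centered right asymptotic and centered left asymptotic pairs together). -/
namespace SAdicPaper


section Statement19Aux

variable {A : Type} [TopologicalSpace A]

theorem aux_shiftZ_mem {X : Set (ℤ → A)} (hX : IsSubshift X) {x : ℤ → A} (hx : x ∈ X)
    (k : ℤ) : shiftZ k x ∈ X := by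
  have h := hX.2 k
  rw [← h]
  exact ⟨x, hx, rfl⟩

theorem aux_shiftZ_zero (x : ℤ → A) : shiftZ 0 x = x := funext fun n => by simp [shiftZ]

theorem aux_periodic {X : Set (ℤ → A)} (hX : IsSubshift X) (hap : Aperiodic X)
    {u : ℤ → A} (hu : u ∈ X) {d K : ℤ} (hd : 0 < d)
    (h : ∀ j, K ≤ j → u (j + d) = u j) : False := by
  set z : ℤ → A := fun j => u (K + (j - K) % d) with hz
  have hper : ∀ i, K ≤ i → u i = z i := by
    have main : ∀ n : ℕ, ∀ i : ℤ, K ≤ i → (i - K).toNat = n → u i = z i := by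
      intro n
      induction n using Nat.strong_induction_on with
      | _ n ih =>
        intro i hi hn
        by_cases hlt : i < K + d
        · have hmod : (i - K) % d = i - K := Int.emod_eq_of_lt (by omega) (by omega)
          simp only [hz, hmod]
          congr 1
          omega
        · have hKd : K ≤ i - d := by omega
          have e1 : u i = u (i - d) := by
            have := h (i - d) hKd
            rw [sub_add_cancel] at this
            exact this
          have e2 : u (i - d) = z (i - d) :=
            ih (i - d - K).toNat (by omega) (i - d) hKd rfl
          have e3 : z (i - d) = z i := by
            simp only [hz]
            congr 1
            have e : i - d - K = (i - K) + d * (-1) := by ring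
            rw [e, Int.add_mul_emod_self_left]
          rw [e1, e2, e3]
    intro i hi
    exact main (i - K).toNat i hi rfl
  have hzper : shiftZ d z = z := by
    funext n
    simp only [shiftZ, hz]
    congr 1
    have e : n + d - K = (n - K) + d * 1 := by ring
    rw [e, Int.add_mul_emod_self_left]
  have hzX : z ∈ X := by
    have hyX : ∀ N : ℕ, shiftZ (d * ((K.toNat + N : ℕ) : ℤ)) u ∈ X := fun N =>
      aux_shiftZ_mem hX hu _
    refine hX.1.mem_of_tendsto (b := (Filter.atTop : Filter ℕ)) (f := fun N : ℕ => shiftZ (d * ((K.toNat + N : ℕ) : ℤ)) u)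
      ?_ (Filter.Eventually.of_forall hyX)
    rw [tendsto_pi_nhds]
    intro j
    refine Filter.Tendsto.congr' ?_ tendsto_const_nhds
    rw [Filter.EventuallyEq, Filter.eventually_atTop]
    refine ⟨(K - j).toNat, fun N hN => ?_⟩
    have hM0 : (K - j) ≤ ((K.toNat + N : ℕ) : ℤ) := by push_cast; omega
    have hM1 : (0:ℤ) ≤ ((K.toNat + N : ℕ) : ℤ) := by positivity
    have hD : K ≤ j + d * ((K.toNat + N : ℕ) : ℤ) := by nlinarith
    have e1 : u (j + d * ((K.toNat + N : ℕ) : ℤ)) = z (j + d * ((K.toNat + N : ℕ) : ℤ)) :=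
      hper _ hD
    have e2 : z (j + d * ((K.toNat + N : ℕ) : ℤ)) = z j := by
      simp only [hz]
      congr 1
      have e : j + d * ((K.toNat + N : ℕ) : ℤ) - K = (j - K) + d * ((K.toNat + N : ℕ) : ℤ) := by
        ring
      rw [e, Int.add_mul_emod_self_left]
    show z j = shiftZ (d * ((K.toNat + N : ℕ) : ℤ)) u j
    rw [show shiftZ (d * ((K.toNat + N : ℕ) : ℤ)) u j = u (j + d * ((K.toNat + N : ℕ) : ℤ)) from rfl, e1, e2]
  exact hap z hzX d (by omega) hzper

omit [TopologicalSpace A] in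
theorem aux_encard_prod {B C : Type} (s : Set B) (t : Set C) (hs : s.Finite) (ht : t.Finite) :
    (s ×ˢ t).encard = s.encard * t.encard := by
  have hst : (s ×ˢ t).Finite := hs.prod ht
  rw [hs.encard_eq_coe_toFinset_card, ht.encard_eq_coe_toFinset_card,
    hst.encard_eq_coe_toFinset_card, ← Nat.cast_mul]
  congr 1
  rw [← Finset.card_product]
  congr 1
  ext p
  simp

theorem aux_right [Fintype A] {X : Set (ℤ → A)} (L : ℕ) (hX : IsSubshift X) (hap : Aperiodic X)
    (hR : {f : ℕ → A | ∃ x ∈ X, ∃ x' ∈ X, CenteredRightAsymptotic x x' ∧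
        f = fun n : ℕ => x ((n : ℤ) + 1)}.encard ≤ (L : ℕ∞)) :
    {p : (ℤ → A) × (ℤ → A) | p.1 ∈ X ∧ p.2 ∈ X ∧ CenteredRightAsymptotic p.1 p.2}.encard ≤
      ((L * Fintype.card A : ℕ) : ℕ∞) * ((L * Fintype.card A : ℕ) : ℕ∞) := by
  classical
  set TR := {f : ℕ → A | ∃ x ∈ X, ∃ x' ∈ X, CenteredRightAsymptotic x x' ∧
      f = fun n : ℕ => x ((n : ℤ) + 1)} with hTRdef
  have hTRfin : TR.Finite := by
    rw [← Set.encard_ne_top_iff]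
    intro htop
    rw [htop] at hR
    exact (ENat.coe_ne_top L) (top_le_iff.mp hR)
  -- tails and branch points
  set tl : (ℤ → A) → ℤ → (ℕ → A) := fun u m n => u ((n : ℤ) + 1 + m) with htldef
  set Br : (ℤ → A) → ℤ → Prop := fun u m => ∃ v ∈ X, CenteredRightAsymptotic (shiftZ m u) v
    with hBrdef
  have htl_mem : ∀ u, u ∈ X → ∀ m, Br u m → tl u m ∈ TR := by
    rintro u hu m ⟨v, hv, hcra⟩
    exact ⟨shiftZ m u, aux_shiftZ_mem hX hu m, v, hv, hcra, rfl⟩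
  have htl_inj : ∀ u, u ∈ X → ∀ m m', tl u m = tl u m' → m = m' := by
    intro u hu m m' he
    by_contra hne
    have key : ∀ a b : ℤ, a < b → tl u a = tl u b → False := by
      intro a b hlt heq
      refine aux_periodic hX hap hu (d := b - a) (K := a + 1) (by omega) ?_
      intro j hj
      have hn := congrFun heq (j - a - 1).toNat
      have hcast : (((j - a - 1).toNat : ℤ)) = j - a - 1 := by omega
      simp only [htldef] at hn
      rw [hcast] at hn
      have e1 : j - a - 1 + 1 + a = j := by ring
      have e2 : j - a - 1 + 1 + b = j + (b - a) := by ring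
      rw [e1, e2] at hn
      exact hn.symm
    rcases lt_or_gt_of_ne hne with hlt | hlt
    · exact key m m' hlt he
    · exact key m' m hlt he.symm
  have hBrFin : ∀ u, u ∈ X → {m | Br u m}.Finite := by
    intro u hu
    refine Set.Finite.of_finite_image (f := tl u) ?_ ?_
    · refine hTRfin.subset ?_
      rintro f ⟨m, hm, rfl⟩
      exact htl_mem u hu m hm
    · exact fun m _ m' _ h => htl_inj u hu m m' h
  -- choice of least branch point
  have hminex : ∀ u : ℤ → A, ∃ m : ℤ, (u ∈ X ∧ Br u 0) →
      (Br u m ∧ ∀ m', Br u m' → m ≤ m') := by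
    intro u
    by_cases hu : u ∈ X ∧ Br u 0
    · obtain ⟨a, ha, hle⟩ := Set.exists_min_image {m | Br u m} id (hBrFin u hu.1) ⟨0, hu.2⟩
      exact ⟨a, fun _ => ⟨ha, fun m' hm' => hle m' hm'⟩⟩
    · exact ⟨0, fun h => absurd h hu⟩
  choose mst hmst using hminex
  set ER := {p : (ℤ → A) × (ℤ → A) | p.1 ∈ X ∧ p.2 ∈ X ∧ CenteredRightAsymptotic p.1 p.2}
    with hERdef
  have hDmem : ∀ p ∈ ER, (p.1 ∈ X ∧ Br p.1 0) ∧ (p.2 ∈ X ∧ Br p.2 0) := by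
    rintro p ⟨h1, h2, hcra⟩
    refine ⟨⟨h1, p.2, h2, ?_⟩, ⟨h2, p.1, h1, ?_⟩⟩
    · rw [aux_shiftZ_zero]; exact hcra
    · rw [aux_shiftZ_zero]; exact ⟨fun n hn => (hcra.1 n hn).symm, fun h => hcra.2 h.symm⟩
  -- rigidity
  have hrigid : ∀ u u' (m₁ m₂ : ℤ), u ∈ X → u' ∈ X → Br u m₁ → (∀ m', Br u m' → m₁ ≤ m') →
      tl u m₁ = tl u' m₂ → u m₁ = u' m₂ → ∀ j : ℤ, u (j + m₁) = u' (j + m₂) := by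
    intro u u' m₁ m₂ hu hu' hbr hminm he hl
    by_contra hcon
    push_neg at hcon
    have hforpos : ∀ j : ℤ, 0 ≤ j → u (j + m₁) = u' (j + m₂) := by
      intro j hj
      by_cases h0 : j = 0
      · subst h0; rw [zero_add, zero_add]; exact hl
      · have hn := congrFun he (j - 1).toNat
        have hcast : (((j - 1).toNat : ℤ)) = j - 1 := by omega
        simp only [htldef] at hn
        rw [hcast] at hn
        have e1 : j - 1 + 1 + m₁ = j + m₁ := by ring
        have e2 : j - 1 + 1 + m₂ = j + m₂ := by ring
        rw [e1, e2] at hn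
        exact hn
    obtain ⟨jb, hjb, hjmax⟩ := Int.exists_greatest_of_bdd
      (P := fun j => u (j + m₁) ≠ u' (j + m₂))
      ⟨0, fun z hz => by by_contra hzz; push_neg at hzz; exact hz (hforpos z (by omega))⟩
      hcon
    have hjneg : jb < 0 := by
      rcases lt_or_ge jb 0 with hingon | hge
      · exact hingon
      · exact absurd (hforpos jb hge) hjb
    have hbr2 : Br u (m₁ + jb) := by
      refine ⟨shiftZ (m₂ + jb) u', aux_shiftZ_mem hX hu' _, ?_, ?_⟩
      · intro n hn
        have hnP : ¬ (u ((n + jb) + m₁) ≠ u' ((n + jb) + m₂)) := fun hc => by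
          have := hjmax _ hc; omega
        have e1 : n + (m₁ + jb) = (n + jb) + m₁ := by ring
        have e2 : n + (m₂ + jb) = (n + jb) + m₂ := by ring
        show u (n + (m₁ + jb)) = u' (n + (m₂ + jb))
        rw [e1, e2]
        exact not_not.mp hnP
      · show u (0 + (m₁ + jb)) ≠ u' (0 + (m₂ + jb))
        have e1 : 0 + (m₁ + jb) = jb + m₁ := by ring
        have e2 : 0 + (m₂ + jb) = jb + m₂ := by ring
        rw [e1, e2]
        exact hjb
    have := hminm _ hbr2
    omega
  -- the injection
  set F : ((ℤ → A) × (ℤ → A)) → ((ℕ → A) × A) × ((ℕ → A) × A) :=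
    fun p => ((tl p.1 (mst p.1), p.1 (mst p.1)), (tl p.2 (mst p.2), p.2 (mst p.2))) with hFdef
  have hinj : Set.InjOn F ER := by
    intro p hp q hq hFeq
    obtain ⟨hp1, hp2⟩ := hDmem p hp
    obtain ⟨hq1, hq2⟩ := hDmem q hq
    have hmp1 := hmst p.1 hp1
    have hmp2 := hmst p.2 hp2
    have hmq1 := hmst q.1 hq1
    have hmq2 := hmst q.2 hq2
    simp only [hFdef, Prod.mk.injEq] at hFeq
    obtain ⟨⟨e11, e12⟩, e21, e22⟩ := hFeq
    have h1 := hrigid p.1 q.1 (mst p.1) (mst q.1) hp1.1 hq1.1 hmp1.1 hmp1.2 e11 e12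
    have h2 := hrigid p.2 q.2 (mst p.2) (mst q.2) hp2.1 hq2.1 hmp2.1 hmp2.2 e21 e22
    have hcra_p : CenteredRightAsymptotic p.1 p.2 := hp.2.2
    have hcra_q : CenteredRightAsymptotic q.1 q.2 := hq.2.2
    have hq1eq : ∀ k : ℤ, q.1 k = p.1 (k + (mst p.1 - mst q.1)) := by
      intro k
      have := h1 (k - mst q.1)
      have e : k - mst q.1 + mst q.1 = k := by ring
      have e' : k - mst q.1 + mst p.1 = k + (mst p.1 - mst q.1) := by ring
      rw [e, e'] at this
      exact this.symm
    have hq2eq : ∀ k : ℤ, q.2 k = p.2 (k + (mst p.2 - mst q.2)) := by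
      intro k
      have := h2 (k - mst q.2)
      have e : k - mst q.2 + mst q.2 = k := by ring
      have e' : k - mst q.2 + mst p.2 = k + (mst p.2 - mst q.2) := by ring
      rw [e, e'] at this
      exact this.symm
    set d1 := mst p.1 - mst q.1 with hd1def
    set d2 := mst p.2 - mst q.2 with hd2def
    by_cases hd : d1 = d2
    · by_cases hd0 : d1 = 0
      · have hq1p : q.1 = p.1 := funext fun k => by rw [hq1eq k, hd0, add_zero]
        have hq2p : q.2 = p.2 := funext fun k => by
          rw [hq2eq k, ← hd, hd0, add_zero]
        exact (Prod.ext hq1p hq2p).symm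
      · exfalso
        have hne : p.1 d1 ≠ p.2 d1 := by
          have h0 := hcra_q.2
          rw [hq1eq 0, hq2eq 0, ← hd, zero_add] at h0
          exact h0
        have hag : ∀ n : ℤ, 0 < n → p.1 (n + d1) = p.2 (n + d1) := by
          intro n hn
          have := hcra_q.1 n hn
          rw [hq1eq n, hq2eq n, ← hd] at this
          exact this
        rcases lt_or_gt_of_ne hd0 with hneg | hpos
        · have := hag (-d1) (by omega)
          rw [neg_add_cancel] at this
          exact hcra_p.2 this
        · exact hne (hcra_p.1 d1 hpos)
    · exfalso
      have hkey : ∀ j : ℤ, max 1 (1 + d2) ≤ j → p.1 (j + (d1 - d2)) = p.1 j := by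
        intro j hj
        have hn : 0 < j - d2 := by
          have := le_max_right 1 (1 + d2); omega
        have h1' := hcra_q.1 (j - d2) hn
        rw [hq1eq (j - d2), hq2eq (j - d2)] at h1'
        have hj0 : 0 < j := by
          have := le_max_left 1 (1 + d2); omega
        have h2' := hcra_p.1 j hj0
        have e1 : j - d2 + d1 = j + (d1 - d2) := by ring
        have e2 : j - d2 + d2 = j := by ring
        rw [e1, e2] at h1'
        rw [h1', ← h2']
      rcases lt_or_gt_of_ne (sub_ne_zero.mpr hd) with hneg | hpos
      · -- d1 - d2 < 0
        refine aux_periodic hX hap hp1.1 (d := d2 - d1) (K := max 1 (1 + d2) + (d1 - d2)) (by omega) ?_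
        intro j hj
        have := hkey (j + (d2 - d1)) (by omega)
        have e : j + (d2 - d1) + (d1 - d2) = j := by ring
        rw [e] at this
        exact this.symm
      · refine aux_periodic hX hap hp1.1 (d := d1 - d2) (K := max 1 (1 + d2)) (by omega) ?_
        intro j hj
        exact hkey j hj
  have himg : F '' ER ⊆ (TR ×ˢ (Set.univ : Set A)) ×ˢ (TR ×ˢ (Set.univ : Set A)) := by
    rintro _ ⟨p, hp, rfl⟩
    obtain ⟨hp1, hp2⟩ := hDmem p hp
    exact ⟨⟨htl_mem _ hp1.1 _ (hmst p.1 hp1).1, trivial⟩,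
      ⟨htl_mem _ hp2.1 _ (hmst p.2 hp2).1, trivial⟩⟩
  have hTRu_fin : (TR ×ˢ (Set.univ : Set A)).Finite := hTRfin.prod (Set.finite_univ)
  calc ER.encard = (F '' ER).encard := (hinj.encard_image).symm
    _ ≤ ((TR ×ˢ (Set.univ : Set A)) ×ˢ (TR ×ˢ (Set.univ : Set A))).encard :=
        Set.encard_mono himg
    _ = (TR ×ˢ (Set.univ : Set A)).encard * (TR ×ˢ (Set.univ : Set A)).encard :=
        aux_encard_prod _ _ hTRu_fin hTRu_fin
    _ ≤ ((L * Fintype.card A : ℕ) : ℕ∞) * ((L * Fintype.card A : ℕ) : ℕ∞) := by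
        have h1 : (TR ×ˢ (Set.univ : Set A)).encard ≤ ((L * Fintype.card A : ℕ) : ℕ∞) := by
          rw [aux_encard_prod _ _ hTRfin Set.finite_univ, Set.encard_univ,
            ENat.card_eq_coe_fintype_card, Nat.cast_mul]
          exact mul_le_mul' hR le_rfl
        exact mul_le_mul' h1 h1

end Statement19Aux

/-- an aperiodic subshift with at most `L` right asymptotic tails and at
most `L` left asymptotic tails has at most `2L²(#A)²` centered asymptotic pairs. -/
theorem statement19 {A : Type} [Fintype A] [TopologicalSpace A] [DiscreteTopology A]
    (X : Set (ℤ → A)) (L : ℕ)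
    (hX : IsSubshift X) (hap : Aperiodic X)
    (hR : {f : ℕ → A | ∃ x ∈ X, ∃ x' ∈ X, CenteredRightAsymptotic x x' ∧
        f = fun n : ℕ => x ((n : ℤ) + 1)}.encard ≤ (L : ℕ∞))
    (hL : {f : ℕ → A | ∃ x ∈ X, ∃ x' ∈ X, CenteredLeftAsymptotic x x' ∧
        f = fun n : ℕ => x (-(n : ℤ) - 1)}.encard ≤ (L : ℕ∞)) :
    {p : (ℤ → A) × (ℤ → A) | p.1 ∈ X ∧ p.2 ∈ X ∧
        (CenteredRightAsymptotic p.1 p.2 ∨ CenteredLeftAsymptotic p.1 p.2)}.encard ≤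
      ((2 * L ^ 2 * Fintype.card A ^ 2 : ℕ) : ℕ∞) := by
  classical
  set Rm : (ℤ → A) → (ℤ → A) := fun x n => x (-n) with hRmdef
  have hRR : ∀ x, Rm (Rm x) = x := fun x => funext fun n => by simp [hRmdef]
  have hRinj : Function.Injective Rm := fun x y h => by rw [← hRR x, h, hRR]
  have hRcont : Continuous Rm := continuous_pi fun n => continuous_apply (-n)
  have hRshift : ∀ (k : ℤ) (x : ℤ → A), shiftZ k (Rm x) = Rm (shiftZ (-k) x) := by
    intro k x
    funext n
    show x (-(n + k)) = x (-n + -k)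
    congr 1
    ring
  have hRimg : Rm '' X = Rm ⁻¹' X := by
    ext y
    constructor
    · rintro ⟨x, hx, rfl⟩
      show Rm (Rm x) ∈ X
      rw [hRR]
      exact hx
    · intro h
      exact ⟨Rm y, h, hRR y⟩
  have hYsub : IsSubshift (Rm '' X) := by
    constructor
    · rw [hRimg]
      exact hX.1.preimage hRcont
    · intro k
      calc shiftZ k '' (Rm '' X) = (fun x => shiftZ k (Rm x)) '' X := Set.image_image _ _ _
        _ = (fun x => Rm (shiftZ (-k) x)) '' X := by simp only [hRshift]
        _ = Rm '' (shiftZ (-k) '' X) := (Set.image_image _ _ _).symm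
        _ = Rm '' X := by rw [hX.2 (-k)]
  have hYap : Aperiodic (Rm '' X) := by
    rintro y ⟨x, hx, rfl⟩ k hk heq
    rw [hRshift] at heq
    exact hap x hx (-k) (neg_ne_zero.mpr hk) (hRinj heq)
  have hCLAtoCRA : ∀ x x' : ℤ → A, CenteredLeftAsymptotic x x' →
      CenteredRightAsymptotic (Rm x) (Rm x') := by
    intro x x' h
    constructor
    · intro n hn
      show x (-n) = x' (-n)
      exact h.1 (-n) (by omega)
    · show x (-0) ≠ x' (-0)
      rw [neg_zero]
      exact h.2
  have hCRAtoCLA : ∀ x x' : ℤ → A, CenteredRightAsymptotic (Rm x) (Rm x') →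
      CenteredLeftAsymptotic x x' := by
    intro x x' h
    constructor
    · intro n hn
      have h1 := h.1 (-n) (by omega)
      show x n = x' n
      have e : - -n = n := by ring
      rw [show (Rm x) (-n) = x (- -n) from rfl, show (Rm x') (-n) = x' (- -n) from rfl, e] at h1
      exact h1
    · have h2 := h.2
      show x 0 ≠ x' 0
      rw [show (Rm x) 0 = x (-0) from rfl, show (Rm x') 0 = x' (-0) from rfl, neg_zero] at h2
      exact h2
  have hYtails : {f : ℕ → A | ∃ x ∈ Rm '' X, ∃ x' ∈ Rm '' X, CenteredRightAsymptotic x x' ∧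
      f = fun n : ℕ => x ((n : ℤ) + 1)} ⊆
      {f : ℕ → A | ∃ x ∈ X, ∃ x' ∈ X, CenteredLeftAsymptotic x x' ∧
        f = fun n : ℕ => x (-(n : ℤ) - 1)} := by
    rintro f ⟨x, ⟨y, hy, rfl⟩, x', ⟨y', hy', rfl⟩, hcra, rfl⟩
    refine ⟨y, hy, y', hy', hCRAtoCLA y y' hcra, ?_⟩
    funext n
    show y (-((n : ℤ) + 1)) = y (-(n : ℤ) - 1)
    congr 1
    ring
  have hYR : {f : ℕ → A | ∃ x ∈ Rm '' X, ∃ x' ∈ Rm '' X, CenteredRightAsymptotic x x' ∧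
      f = fun n : ℕ => x ((n : ℤ) + 1)}.encard ≤ (L : ℕ∞) :=
    le_trans (Set.encard_mono hYtails) hL
  have hmainY := aux_right (A := A) L hYsub hYap hYR
  have hmainX := aux_right (A := A) L hX hap hR
  set EL := {p : (ℤ → A) × (ℤ → A) | p.1 ∈ X ∧ p.2 ∈ X ∧ CenteredLeftAsymptotic p.1 p.2}
    with hELdef
  set G : ((ℤ → A) × (ℤ → A)) → ((ℤ → A) × (ℤ → A)) := fun p => (Rm p.1, Rm p.2) with hGdef
  have hginj : Set.InjOn G EL := by
    intro p _ q _ h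
    simp only [hGdef, Prod.mk.injEq] at h
    exact Prod.ext (hRinj h.1) (hRinj h.2)
  have hgimg : G '' EL ⊆
      {p : (ℤ → A) × (ℤ → A) | p.1 ∈ Rm '' X ∧ p.2 ∈ Rm '' X ∧ CenteredRightAsymptotic p.1 p.2} := by
    rintro _ ⟨p, ⟨h1, h2, hcla⟩, rfl⟩
    exact ⟨⟨p.1, h1, rfl⟩, ⟨p.2, h2, rfl⟩, hCLAtoCRA _ _ hcla⟩
  have hELcard : EL.encard ≤
      ((L * Fintype.card A : ℕ) : ℕ∞) * ((L * Fintype.card A : ℕ) : ℕ∞) :=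
    calc EL.encard = (G '' EL).encard := (hginj.encard_image).symm
      _ ≤ _ := le_trans (Set.encard_mono hgimg) hmainY
  have hsplit : {p : (ℤ → A) × (ℤ → A) | p.1 ∈ X ∧ p.2 ∈ X ∧
      (CenteredRightAsymptotic p.1 p.2 ∨ CenteredLeftAsymptotic p.1 p.2)} ⊆
      {p : (ℤ → A) × (ℤ → A) | p.1 ∈ X ∧ p.2 ∈ X ∧ CenteredRightAsymptotic p.1 p.2} ∪ EL := by
    rintro p ⟨h1, h2, h3 | h3⟩
    · exact Or.inl ⟨h1, h2, h3⟩
    · exact Or.inr ⟨h1, h2, h3⟩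
  calc {p : (ℤ → A) × (ℤ → A) | p.1 ∈ X ∧ p.2 ∈ X ∧
      (CenteredRightAsymptotic p.1 p.2 ∨ CenteredLeftAsymptotic p.1 p.2)}.encard
      ≤ ({p : (ℤ → A) × (ℤ → A) | p.1 ∈ X ∧ p.2 ∈ X ∧ CenteredRightAsymptotic p.1 p.2}
          ∪ EL).encard := Set.encard_mono hsplit
    _ ≤ {p : (ℤ → A) × (ℤ → A) | p.1 ∈ X ∧ p.2 ∈ X ∧
          CenteredRightAsymptotic p.1 p.2}.encard + EL.encard := Set.encard_union_le _ _
    _ ≤ ((L * Fintype.card A : ℕ) : ℕ∞) * ((L * Fintype.card A : ℕ) : ℕ∞) +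
          ((L * Fintype.card A : ℕ) : ℕ∞) * ((L * Fintype.card A : ℕ) : ℕ∞) :=
        add_le_add hmainX hELcard
    _ = ((2 * L ^ 2 * Fintype.card A ^ 2 : ℕ) : ℕ∞) := by push_cast; ring


end SAdicPaper
end
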